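/- arXiv:2508.10452 — 10 statements merged into one kernel-verified Lean document; each statement's English description precedes it below -/
import Mathlib

section
/- For integers n ≤ k ≤ m, the k-th derivative of (x-1)^(m-n)·x^n equals ((m-n)!/(m-k)!) · x^(n-k) · (the n-th derivative of (x-1)^(m-k)·x^k). -/
open Polynomial

lemma cast_descFactorial_real {a b : ℕ} (h : b ≤ a) :
    ((a.descFactorial b : ℝ)) = (Nat.factorial a : ℝ) / (Nat.factorial (a - b) : ℝ) := by
  rw [eq_div_iff (by exact_mod_cast (a - b).factorial_ne_zero)]
  rw [mul_comm]
  exact_mod_cast Nat.factorial_mul_descFactorial h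

lemma scalar_key (n k m i : ℕ) (hnk : n ≤ k) (hkm : k ≤ m) (hin : i ≤ n) :
    ((k.choose i : ℝ) * ((m - n).descFactorial (k - i) : ℝ) * (n.descFactorial i : ℝ)) =
      ((Nat.factorial (m - n) : ℝ) / (Nat.factorial (m - k) : ℝ)) *
        ((n.choose i : ℝ) * ((m - k).descFactorial (n - i) : ℝ) * (k.descFactorial i : ℝ)) := by
  by_cases hd : n - i ≤ m - k
  · have hd2 : k - i ≤ m - n := by omega
    have e1 : (m - n) - (k - i) = (m - k) - (n - i) := by omega
    rw [cast_descFactorial_real hd2, cast_descFactorial_real hd,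
        cast_descFactorial_real hin, cast_descFactorial_real (hin.trans hnk),
        Nat.cast_choose ℝ (hin.trans hnk), Nat.cast_choose ℝ hin, e1]
    have h0 : ∀ a : ℕ, (Nat.factorial a : ℝ) ≠ 0 := fun a => by
      exact_mod_cast a.factorial_ne_zero
    field_simp
  · have h1 : (m - n).descFactorial (k - i) = 0 :=
      Nat.descFactorial_eq_zero_iff_lt.2 (by omega)
    have h2 : (m - k).descFactorial (n - i) = 0 :=
      Nat.descFactorial_eq_zero_iff_lt.2 (by omega)
    rw [h1, h2]
    push_cast
    ring

/-- For integers `n ≤ k ≤ m`, the `k`-th derivative of `(x-1)^(m-n) * x^n` equals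
`((m-n)!/(m-k)!) * x^(n-k)` times the `n`-th derivative of `(x-1)^(m-k) * x^k`.
Stated multiplied through by `x^(k-n)` to stay in the polynomial ring. -/
theorem stmt_0 (n k m : ℕ) (hnk : n ≤ k) (hkm : k ≤ m) :
    (X : Polynomial ℝ) ^ (k - n) * (derivative^[k] ((X - 1) ^ (m - n) * X ^ n)) =
      C ((Nat.factorial (m - n) : ℝ) / (Nat.factorial (m - k) : ℝ)) *
        derivative^[n] ((X - 1) ^ (m - k) * X ^ k) := by
  have h1 : ((X : Polynomial ℝ) - 1) = X - C 1 := by simp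
  rw [iterate_derivative_mul, iterate_derivative_mul, Finset.mul_sum, Finset.mul_sum]
  rw [← Finset.sum_subset (Finset.range_subset_range.mpr (Nat.succ_le_succ hnk))
    (fun i hi hni => by
      have hn : n < i := by
        simp only [Finset.mem_range, Nat.lt_succ_iff] at hi hni; omega
      rw [iterate_derivative_eq_zero
        (show (X ^ n : Polynomial ℝ).natDegree < i by simpa using hn)]
      simp)]
  refine Finset.sum_congr rfl fun i hi => ?_
  have hin : i ≤ n := by simpa [Nat.lt_succ_iff] using hi
  rw [h1, iterate_derivative_X_sub_pow, iterate_derivative_X_sub_pow,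
      iterate_derivative_X_pow_eq_C_mul, iterate_derivative_X_pow_eq_C_mul]
  have e1 : (m - n) - (k - i) = (m - k) - (n - i) := by omega
  have hX : (X : Polynomial ℝ) ^ (k - n) * X ^ (n - i) = X ^ (k - i) := by
    rw [← pow_add]; congr 1; omega
  have hc := scalar_key n k m i hnk hkm hin
  rw [e1]
  calc (X : Polynomial ℝ) ^ (k - n) *
        (k.choose i • ((m - n).descFactorial (k - i) •
          (X - C 1) ^ ((m - k) - (n - i)) * (C (n.descFactorial i : ℝ) * X ^ (n - i))))
      = C ((k.choose i : ℝ) * ((m - n).descFactorial (k - i) : ℝ) *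
            (n.descFactorial i : ℝ)) *
          (X - C 1) ^ ((m - k) - (n - i)) * (X ^ (k - n) * X ^ (n - i)) := by
        simp only [nsmul_eq_mul, map_mul, C_eq_natCast]
        ring
    _ = C (((Nat.factorial (m - n) : ℝ) / (Nat.factorial (m - k) : ℝ)) *
            ((n.choose i : ℝ) * ((m - k).descFactorial (n - i) : ℝ) *
              (k.descFactorial i : ℝ))) *
          (X - C 1) ^ ((m - k) - (n - i)) * X ^ (k - i) := by
        rw [hX, hc]
    _ = C ((Nat.factorial (m - n) : ℝ) / (Nat.factorial (m - k) : ℝ)) *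
        (n.choose i • ((m - k).descFactorial (n - i) •
          (X - C 1) ^ ((m - k) - (n - i)) * (C (k.descFactorial i : ℝ) * X ^ (k - i)))) := by
        simp only [nsmul_eq_mul, map_mul, C_eq_natCast]
        ring
end

section
/- Let g(x) = n(n-1)(1-x)^2 + 2n(m-n)x(x-1) + (m-n)(m-n-1)x^2, where 2 ≤ n < m are integers. Then the smallest real root of g is (n - √(n(m-n)/(m-1)))/m. -/
/-- Let `g(x) = n(n-1)(1-x)² + 2n(m-n)x(x-1) + (m-n)(m-n-1)x²` with integers `2 ≤ n < m`.
Then the smallest real root of `g` is `(n - √(n(m-n)/(m-1)))/m`. -/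
theorem stmt_2 (n m : ℕ) (hn : 2 ≤ n) (hnm : n < m) :
    IsLeast {x : ℝ |
        (n : ℝ) * ((n : ℝ) - 1) * (1 - x) ^ 2 + 2 * n * ((m : ℝ) - n) * x * (x - 1) +
          ((m : ℝ) - n) * ((m : ℝ) - n - 1) * x ^ 2 = 0}
      (((n : ℝ) - Real.sqrt ((n : ℝ) * ((m : ℝ) - n) / ((m : ℝ) - 1))) / m) := by
  set N : ℝ := (n : ℝ) with hN
  set M : ℝ := (m : ℝ) with hM
  have hN2 : (2 : ℝ) ≤ N := by rw [hN]; exact_mod_cast hn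
  have hMN : N < M := by rw [hN, hM]; exact_mod_cast hnm
  have hM1 : (1 : ℝ) < M := by linarith
  have hM0 : M ≠ 0 := by linarith
  have hM1' : M - 1 ≠ 0 := by linarith
  set s : ℝ := Real.sqrt (N * (M - N) / (M - 1)) with hs
  have hsnn : 0 ≤ s := Real.sqrt_nonneg _
  have hs2 : s ^ 2 = N * (M - N) / (M - 1) := by
    rw [hs, Real.sq_sqrt]
    apply div_nonneg
    · nlinarith
    · linarith
  have key : s ^ 2 * (M - 1) = N * (M - N) := by
    rw [hs2]; field_simp
  have hfac : ∀ x : ℝ, N * (N - 1) * (1 - x) ^ 2 + 2 * N * (M - N) * x * (x - 1) +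
      (M - N) * (M - N - 1) * x ^ 2
      = M * (M - 1) * (x - (N - s) / M) * (x - (N + s) / M) := by
    intro x
    field_simp
    ring_nf
    linear_combination key
  constructor
  · show N * (N - 1) * (1 - (N - s) / M) ^ 2 + 2 * N * (M - N) * ((N - s) / M) * ((N - s) / M - 1) +
      (M - N) * (M - N - 1) * ((N - s) / M) ^ 2 = 0
    rw [hfac]
    ring
  · intro x hx
    have hx' : N * (N - 1) * (1 - x) ^ 2 + 2 * N * (M - N) * x * (x - 1) +
        (M - N) * (M - N - 1) * x ^ 2 = 0 := hx
    rw [hfac x] at hx'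
    rcases mul_eq_zero.mp hx' with h | h
    · rcases mul_eq_zero.mp h with h | h
      · exact absurd h (by positivity)
      · linarith [sub_eq_zero.mp h]
    · have hx2 : x = (N + s) / M := by linarith [sub_eq_zero.mp h]
      rw [hx2]
      gcongr
      linarith
end

section
/- For integers k, n, m with 1 ≤ k ≤ n and m ≥ n+1, define g(x) = Σ_{i=0}^{min(m-n,k)} (-1)^i · (n!/(n-k+i)!) · ((m-n)!/(m-n-i)!) · C(k,i) x^i (1-x)^{k-i}. Then the coefficient of x^k in g is (-1)^k Σ_{i=0}^{min(m-n,k)} C(k,i) · (n!/(n-k+i)!) · ((m-n)!/(m-n-i)!), which is nonzero; hence g has degree exactly k. -/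
open Polynomial Finset

lemma one_sub_X_eq : (1 - X : ℝ[X]) = -(X - C 1) := by rw [C_1]; ring

lemma one_sub_X_natDegree (j : ℕ) : ((1 - X : ℝ[X]) ^ j).natDegree = j := by
  rw [one_sub_X_eq, natDegree_pow, natDegree_neg, natDegree_X_sub_C, mul_one]

lemma one_sub_X_coeff (j : ℕ) : ((1 - X : ℝ[X]) ^ j).coeff j = (-1) ^ j := by
  have hl : ((1 - X : ℝ[X]) ^ j).leadingCoeff = (-1) ^ j := by
    rw [one_sub_X_eq, leadingCoeff_pow, leadingCoeff_neg, leadingCoeff_X_sub_C]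
  calc ((1 - X : ℝ[X]) ^ j).coeff j
      = ((1 - X : ℝ[X]) ^ j).coeff (((1 - X : ℝ[X]) ^ j).natDegree) := by
        rw [one_sub_X_natDegree]
    _ = (-1) ^ j := by rw [coeff_natDegree, hl]

lemma term_deg_le (c : ℝ) (i j : ℕ) :
    (C c * X ^ i * (1 - X) ^ j).natDegree ≤ i + j := by
  refine natDegree_mul_le.trans ?_
  have h1 : (C c * X ^ i : ℝ[X]).natDegree ≤ i := natDegree_mul_le.trans (by simp)
  have h2 := one_sub_X_natDegree j
  omega

/-- For `1 ≤ k ≤ n` and `m ≥ n+1`, the polynomial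
`g(x) = Σ_{i=0}^{min(m-n,k)} (-1)^i (n!/(n-k+i)!) ((m-n)!/(m-n-i)!) C(k,i) x^i (1-x)^{k-i}`
has `x^k`-coefficient `(-1)^k Σ_{i=0}^{min(m-n,k)} C(k,i) (n!/(n-k+i)!) ((m-n)!/(m-n-i)!)`,
which is nonzero; hence `g` has degree exactly `k`. -/
theorem stmt_6 (k n m : ℕ) (hk : 1 ≤ k) (hkn : k ≤ n) (hm : n + 1 ≤ m) :
    let g : Polynomial ℝ :=
      ∑ i ∈ range (min (m - n) k + 1),
        C ((-1 : ℝ) ^ i * ((n.factorial : ℝ) / ((n - k + i).factorial : ℝ)) *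
            (((m - n).factorial : ℝ) / ((m - n - i).factorial : ℝ)) * (k.choose i : ℝ)) *
          X ^ i * (1 - X) ^ (k - i)
    g.coeff k = (-1 : ℝ) ^ k *
        ∑ i ∈ range (min (m - n) k + 1),
          (k.choose i : ℝ) * ((n.factorial : ℝ) / ((n - k + i).factorial : ℝ)) *
            (((m - n).factorial : ℝ) / ((m - n - i).factorial : ℝ)) ∧
      g.coeff k ≠ 0 ∧ g.natDegree = k := by
  intro g
  have hterm : ∀ i ∈ range (min (m - n) k + 1),
      (C ((-1 : ℝ) ^ i * ((n.factorial : ℝ) / ((n - k + i).factorial : ℝ)) *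
            (((m - n).factorial : ℝ) / ((m - n - i).factorial : ℝ)) * (k.choose i : ℝ)) *
          X ^ i * (1 - X) ^ (k - i)).coeff k
      = (-1 : ℝ) ^ k * ((k.choose i : ℝ) * ((n.factorial : ℝ) / ((n - k + i).factorial : ℝ)) *
          (((m - n).factorial : ℝ) / ((m - n - i).factorial : ℝ))) := by
    intro i hi
    have hik : i ≤ k := le_trans (Nat.lt_succ_iff.mp (mem_range.mp hi)) (min_le_right _ _)
    rw [mul_assoc, coeff_C_mul, mul_comm ((X : ℝ[X]) ^ i), coeff_mul_X_pow', if_pos hik,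
      one_sub_X_coeff]
    have hpow : (-1 : ℝ) ^ i * (-1 : ℝ) ^ (k - i) = (-1) ^ k := by
      rw [← pow_add, Nat.add_sub_cancel' hik]
    rw [← hpow]
    ring
  have hcoeff : g.coeff k = (-1 : ℝ) ^ k *
      ∑ i ∈ range (min (m - n) k + 1),
        (k.choose i : ℝ) * ((n.factorial : ℝ) / ((n - k + i).factorial : ℝ)) *
          (((m - n).factorial : ℝ) / ((m - n - i).factorial : ℝ)) := by
    rw [show g.coeff k = ∑ i ∈ range (min (m - n) k + 1), _ from finset_sum_coeff _ _ _,
      Finset.sum_congr rfl hterm, ← Finset.mul_sum]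
  have hpos : 0 < ∑ i ∈ range (min (m - n) k + 1),
      (k.choose i : ℝ) * ((n.factorial : ℝ) / ((n - k + i).factorial : ℝ)) *
        (((m - n).factorial : ℝ) / ((m - n - i).factorial : ℝ)) := by
    apply Finset.sum_pos
    · intro i hi
      have hik : i ≤ k := le_trans (Nat.lt_succ_iff.mp (mem_range.mp hi)) (min_le_right _ _)
      have h1 : (0:ℝ) < (k.choose i : ℝ) := by exact_mod_cast Nat.choose_pos hik
      positivity
    · exact nonempty_range_add_one
  have hne : g.coeff k ≠ 0 := by
    rw [hcoeff]
    have h1 : (-1 : ℝ) ^ k ≠ 0 := by positivity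
    exact mul_ne_zero h1 (ne_of_gt hpos)
  refine ⟨hcoeff, hne, ?_⟩
  refine le_antisymm ?_ (le_natDegree_of_ne_zero hne)
  apply Polynomial.natDegree_sum_le_of_forall_le
  intro i hi
  have hik : i ≤ k := le_trans (Nat.lt_succ_iff.mp (mem_range.mp hi)) (min_le_right _ _)
  exact (term_deg_le _ i (k - i)).trans (by omega)
end

section
/- Let k, n, m be integers with 1 ≤ k ≤ n, m ≥ n + k, and k ≥ 2, and let g_∅(x) = Σ_{i=0}^{k} c_i C(k,i) x^i (1-x)^{k-i} with c_i = (-1)^i (n!/(n-k+i)!) ((m-n)!/(m-n-i)!) for 0 ≤ i ≤ min(m-n,k) and c_i = 0 otherwise. If λ_1 ≤ … ≤ λ_k ∈ (0,1) are the roots of g_∅, then Σ_{i=1}^k 1/λ_i = k·(m-k+1)/(n-k+1). -/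
open Polynomial Finset

/-- For `1 ≤ k ≤ n`, `m ≥ n+k`, `k ≥ 2`: if `λ₁ ≤ … ≤ λ_k ∈ (0,1)` are the roots of
`g_∅(x) = Σ_{i=0}^{k} c_i C(k,i) x^i (1-x)^{k-i}` with
`c_i = (-1)^i (n!/(n-k+i)!) ((m-n)!/(m-n-i)!)` for `0 ≤ i ≤ min(m-n,k)` (and `0` otherwise),
then `Σ 1/λᵢ = k(m-k+1)/(n-k+1)`. -/
theorem stmt_8 (k n m : ℕ) (hk1 : 1 ≤ k) (hk2 : 2 ≤ k) (hkn : k ≤ n) (hm : n + k ≤ m)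
    (lam : Fin k → ℝ) (hmono : Monotone lam) (h01 : ∀ i, lam i ∈ Set.Ioo (0 : ℝ) 1)
    (hroots :
      (∑ i ∈ range (min (m - n) k + 1),
          C ((-1 : ℝ) ^ i * ((n.factorial : ℝ) / ((n - k + i).factorial : ℝ)) *
              (((m - n).factorial : ℝ) / ((m - n - i).factorial : ℝ)) * (k.choose i : ℝ)) *
            X ^ i * (1 - X) ^ (k - i)).roots =
        Multiset.map lam Finset.univ.val) :
    ∑ i, (lam i)⁻¹ = k * ((m : ℝ) - k + 1) / ((n : ℝ) - k + 1) := by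
  have hmin : min (m - n) k = k := min_eq_right (by omega)
  rw [hmin] at hroots
  set a : ℕ → ℝ := fun i => (-1 : ℝ) ^ i * ((n.factorial : ℝ) / ((n - k + i).factorial : ℝ)) *
      (((m - n).factorial : ℝ) / ((m - n - i).factorial : ℝ)) * (k.choose i : ℝ) with ha
  set g : ℝ[X] := ∑ i ∈ range (k + 1), C (a i) * X ^ i * (1 - X) ^ (k - i) with hg
  -- degree and factorization
  have hcard : Multiset.card g.roots = k := by rw [hroots]; simp
  have hdeg : g.natDegree ≤ k := by
    rw [hg]
    refine natDegree_sum_le_of_forall_le _ _ ?_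
    intro i hi
    have hik : i ≤ k := by simp at hi; omega
    have h1 : (C (a i) * X ^ i).natDegree ≤ i := natDegree_mul_le.trans (by simp)
    have h2 : ((1 - X : ℝ[X]) ^ (k - i)).natDegree ≤ k - i := by
      refine natDegree_pow_le.trans ?_
      have h3 : (1 - X : ℝ[X]).natDegree ≤ 1 := natDegree_sub_le_iff_left (by simp) |>.2 (by simp)
      calc (k - i) * (1 - X : ℝ[X]).natDegree ≤ (k - i) * 1 := Nat.mul_le_mul_left _ h3
        _ = k - i := by ring
    refine natDegree_mul_le.trans ?_
    omega
  have hcard' : Multiset.card g.roots = g.natDegree := by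
    have := g.card_roots'
    omega
  have hfac := C_leadingCoeff_mul_prod_multiset_X_sub_C (p := g) hcard'
  rw [hroots, Multiset.map_map] at hfac
  set L := g.leadingCoeff with hL
  -- evaluations from factorization
  simp only [Function.comp_def] at hfac
  have hg0fac : g.eval 0 = L * ∏ i, (-(lam i)) := by
    rw [← hfac, eval_mul, eval_C, eval_multiset_prod, Multiset.map_map]
    congr 1
    rw [Multiset.map_congr rfl (fun i _ => by simp : ∀ i ∈ univ.val,
      ((eval 0 : ℝ[X] → ℝ) ∘ fun x => X - C (lam x)) i = -(lam i))]
    rfl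
  have hg'0fac : (derivative g).eval 0 = L * ∑ j, ∏ i ∈ univ.erase j, (-(lam i)) := by
    rw [← hfac, derivative_mul, derivative_C, zero_mul, zero_add, eval_mul, eval_C]
    congr 1
    rw [derivative_prod]
    rw [show (eval 0 : ℝ[X] → ℝ) = ⇑(evalRingHom 0) from rfl, map_multiset_sum]
    rw [Multiset.map_map]
    have key : ∀ j : Fin k, (⇑(evalRingHom 0) ∘ fun i =>
        (Multiset.map (fun i => X - C (lam i)) (univ.val.erase i)).prod *
          derivative (X - C (lam i))) j = ∏ i ∈ univ.erase j, (-(lam i)) := by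
      intro j
      simp [eval_multiset_prod, Multiset.map_map, Function.comp_def, Finset.prod,
        Finset.erase_val]
    rw [Multiset.map_congr rfl fun j _ => key j]
    rfl
  -- evaluations from the explicit sum
  have hg0sum : g.eval 0 = a 0 := by
    obtain ⟨k', hk'⟩ : ∃ k', k = k' + 2 := ⟨k - 2, by omega⟩
    rw [hg, eval_finset_sum, Finset.sum_eq_single 0]
    · simp
    · intro b hb hb0
      simp [zero_pow hb0]
    · simp
  have hg'0sum : (derivative g).eval 0 = -(k : ℝ) * a 0 + a 1 := by
    obtain ⟨k', rfl⟩ : ∃ k', k = k' + 2 := ⟨k - 2, by omega⟩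
    rw [hg, derivative_sum, eval_finset_sum, Finset.sum_range_succ', Finset.sum_range_succ']
    have hz : ∀ i ∈ range (k' + 1), eval 0 (derivative
        (C (a (i + 1 + 1)) * X ^ (i + 1 + 1) * (1 - X) ^ (k' + 2 - (i + 1 + 1)))) = 0 := by
      intro i _
      simp [derivative_mul, derivative_pow, pow_succ]
    rw [Finset.sum_congr rfl hz, Finset.sum_const, smul_zero, zero_add]
    have h1 : eval 0 (derivative (C (a (0 + 1)) * X ^ (0 + 1) * (1 - X) ^ (k' + 2 - (0 + 1))))
        = a 1 := by
      simp [derivative_mul, derivative_pow]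
    have h0 : eval 0 (derivative (C (a 0) * X ^ 0 * (1 - X) ^ (k' + 2 - 0)))
        = -((k' : ℝ) + 2) * a 0 := by
      simp [derivative_mul, derivative_pow]
      ring
    rw [h1, h0]
    push_cast
    ring
  -- basic nonvanishing facts
  have hlamne : ∀ i, lam i ≠ 0 := fun i => ne_of_gt (h01 i).1
  have ha0 : a 0 = (n.factorial : ℝ) / ((n - k).factorial : ℝ) := by
    have hne : (((m - n).factorial : ℝ)) ≠ 0 := by positivity
    rw [ha]
    simp [div_self hne]
  have ha0ne : a 0 ≠ 0 := by
    rw [ha0]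
    positivity
  -- reciprocal sum identity
  have hrecip : L * ∑ j, ∏ i ∈ univ.erase j, (-(lam i)) = -(a 0) * ∑ i, (lam i)⁻¹ := by
    have herase : ∀ j, ∏ i ∈ univ.erase j, (-(lam i)) = (∏ i, (-(lam i))) * (-(lam j))⁻¹ := by
      intro j
      have hne : (-(lam j)) ≠ 0 := neg_ne_zero.2 (hlamne j)
      rw [← Finset.mul_prod_erase univ (fun i => -(lam i)) (mem_univ j), mul_comm,
        ← mul_assoc, inv_mul_cancel₀ hne, one_mul]
    calc L * ∑ j, ∏ i ∈ univ.erase j, (-(lam i))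
        = L * ∑ j, (∏ i, (-(lam i))) * (-(lam j))⁻¹ := by
          congr 1; exact Finset.sum_congr rfl fun j _ => herase j
      _ = (L * ∏ i, (-(lam i))) * ∑ j, (-(lam j))⁻¹ := by
          rw [Finset.mul_sum, Finset.mul_sum]; congr 1; funext j; ring
      _ = -(a 0) * ∑ i, (lam i)⁻¹ := by
          rw [← hg0fac, hg0sum]
          rw [show ∑ j, (-(lam j))⁻¹ = -∑ i, (lam i)⁻¹ by
            rw [← Finset.sum_neg_distrib]
            exact Finset.sum_congr rfl fun j _ => by rw [inv_neg]]
          ring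
  have heq : -(a 0) * ∑ i, (lam i)⁻¹ = -(k : ℝ) * a 0 + a 1 := by
    rw [← hrecip, ← hg'0fac, hg'0sum]
  -- final algebra
  have hS : ∑ i, (lam i)⁻¹ = ((k : ℝ) * a 0 - a 1) / a 0 := by
    field_simp at heq ⊢
    linarith
  have ha1 : a 1 = -((n.factorial : ℝ) / (((n - k).factorial : ℝ) * ((n : ℝ) - k + 1))) *
      ((m : ℝ) - n) * k := by
    have e1 : n - k + 1 = (n - k) + 1 := rfl
    have e2 : m - n = (m - n - 1) + 1 := by omega
    have c1 : ((n - k : ℕ) : ℝ) = (n : ℝ) - k := by push_cast [Nat.cast_sub hkn]; ring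
    have c2 : ((m - n - 1 : ℕ) : ℝ) = (m : ℝ) - n - 1 := by
      have h1 : n ≤ m := by omega
      have h2 : 1 ≤ m - n := by omega
      push_cast [Nat.cast_sub h1, Nat.cast_sub h2]
      ring
    rw [ha]
    simp only [pow_one, Nat.choose_one_right]
    rw [e1, Nat.factorial_succ, e2, Nat.factorial_succ]
    have hfne : (((m - n - 1).factorial : ℝ)) ≠ 0 := by positivity
    push_cast [c1, c2]
    field_simp
    ring
  rw [hS, ha0, ha1]
  have hnk : ((n : ℝ) - k + 1) ≠ 0 := by
    have : (k : ℝ) ≤ n := by exact_mod_cast hkn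
    nlinarith
  have hnf : ((n.factorial : ℝ)) ≠ 0 := by positivity
  have hnkf : (((n - k).factorial : ℝ)) ≠ 0 := by positivity
  field_simp
  ring
end

section
/- Let k, n, m be integers with 1 ≤ k ≤ n, m ≥ n + k, and k ≥ 2, and let g_∅ be as in the previous context with roots λ_1 ≤ … ≤ λ_k ∈ (0,1). Then Σ_{i=1}^k 1/(1-λ_i) = k·(m-k+1)/(m-n-k+1). -/
open Polynomial Finset

private lemma eval_deriv_term (c : ℝ) (i e : ℕ) :
    (derivative (C c * X ^ i * (1 - X) ^ e)).eval 1 = c * i * (0:ℝ)^e - c * e * (0:ℝ)^(e-1) := by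
  simp only [derivative_mul, derivative_pow, derivative_C, derivative_X, derivative_sub,
    derivative_one, eval_add, eval_mul, eval_pow, eval_sub, eval_one, eval_X, eval_C,
    eval_natCast, eval_mul, zero_mul, mul_zero]
  norm_num
  ring

private lemma deriv_prod_lin {ι : Type*} [DecidableEq ι] (s : Finset ι) (c : ι → ℝ) :
    derivative (∏ b ∈ s, (X - C (c b))) = ∑ b ∈ s, ∏ a ∈ s.erase b, (X - C (c a)) := by
  induction s using Finset.induction_on with
  | empty => simp
  | @insert a s ha ih =>
      rw [Finset.prod_insert ha, derivative_mul, ih, Finset.sum_insert ha,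
        Finset.erase_insert ha]
      simp only [derivative_sub, derivative_X, derivative_C, sub_zero, one_mul]
      rw [Finset.mul_sum]
      congr 1
      refine Finset.sum_congr rfl fun b hb => ?_
      have hba : b ≠ a := fun h => ha (h ▸ hb)
      rw [Finset.erase_insert_of_ne hba.symm, Finset.prod_insert
        (fun h => ha (Finset.mem_of_mem_erase h))]

/-- For `1 ≤ k ≤ n`, `m ≥ n+k`, `k ≥ 2`: if `λ₁ ≤ … ≤ λ_k ∈ (0,1)` are the roots of
`g_∅(x) = Σ_{i=0}^{k} c_i C(k,i) x^i (1-x)^{k-i}` with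
`c_i = (-1)^i (n!/(n-k+i)!) ((m-n)!/(m-n-i)!)` for `0 ≤ i ≤ min(m-n,k)` (and `0` otherwise),
then `Σ 1/(1-λᵢ) = k(m-k+1)/(m-n-k+1)`. -/
theorem stmt_9 (k n m : ℕ) (hk1 : 1 ≤ k) (hk2 : 2 ≤ k) (hkn : k ≤ n) (hm : n + k ≤ m)
    (lam : Fin k → ℝ) (hmono : Monotone lam) (h01 : ∀ i, lam i ∈ Set.Ioo (0 : ℝ) 1)
    (hroots :
      (∑ i ∈ range (min (m - n) k + 1),
          C ((-1 : ℝ) ^ i * ((n.factorial : ℝ) / ((n - k + i).factorial : ℝ)) *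
              (((m - n).factorial : ℝ) / ((m - n - i).factorial : ℝ)) * (k.choose i : ℝ)) *
            X ^ i * (1 - X) ^ (k - i)).roots =
        Multiset.map lam Finset.univ.val) :
    ∑ i, (1 - lam i)⁻¹ = k * ((m : ℝ) - k + 1) / ((m : ℝ) - n - k + 1) := by
  have hkmn : k ≤ m - n := le_tsub_of_add_le_left hm
  have hnm : n ≤ m := by omega
  have hmin : min (m - n) k = k := min_eq_right hkmn
  rw [hmin] at hroots
  set a : ℕ → ℝ := fun i => (-1 : ℝ) ^ i * ((n.factorial : ℝ) / ((n - k + i).factorial : ℝ)) *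
      (((m - n).factorial : ℝ) / ((m - n - i).factorial : ℝ)) * (k.choose i : ℝ) with ha
  set p : ℝ[X] := ∑ i ∈ range (k + 1), C (a i) * X ^ i * (1 - X) ^ (k - i) with hp
  -- eval 1 p
  have hA : p.eval 1 = a k := by
    rw [hp, eval_finset_sum, Finset.sum_range_succ]
    simp only [eval_mul, eval_pow, eval_sub, eval_one, eval_X, eval_C, one_pow, sub_self,
      Nat.sub_self, pow_zero, mul_one]
    rw [Finset.sum_eq_zero, zero_add]
    intro i hi
    rw [Finset.mem_range] at hi
    rw [zero_pow (by omega : k - i ≠ 0)]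
    ring
  -- eval 1 (derivative p)
  have hB : (derivative p).eval 1 = k * a k - a (k - 1) := by
    rw [hp, derivative_sum, eval_finset_sum]
    rw [Finset.sum_congr rfl (fun i _ => eval_deriv_term (a i) i (k - i))]
    rw [show k + 1 = (k - 1) + 1 + 1 by omega, Finset.sum_range_succ, Finset.sum_range_succ]
    rw [Finset.sum_eq_zero, zero_add]
    · rw [show k - 1 + 1 = k by omega, Nat.sub_self,
        show k - (k - 1) = 1 by omega]
      norm_num
      ring
    · intro i hi
      rw [Finset.mem_range] at hi
      rw [zero_pow (by omega : k - i ≠ 0), zero_pow (by omega : k - i - 1 ≠ 0)]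
      ring
  -- values of a k and a (k-1)
  have hak : a k = (-1 : ℝ) ^ k * (((m - n).factorial : ℝ) / ((m - n - k).factorial : ℝ)) := by
    rw [ha]
    simp only [Nat.sub_add_cancel hkn, Nat.choose_self, Nat.cast_one, div_self
      (by positivity : (n.factorial : ℝ) ≠ 0)]
    ring
  have hD : (0:ℝ) < (m:ℝ) - n - k + 1 := by
    have : (n:ℝ) + k ≤ m := by exact_mod_cast hm
    linarith
  have hak1 : a (k - 1) = (-1 : ℝ) ^ (k-1) * n * k *
      (((m - n).factorial : ℝ) / ((m - n - k).factorial : ℝ)) / ((m : ℝ) - n - k + 1) := by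
    have hch : k.choose (k-1) = k := by
      rw [← Nat.choose_symm (by omega : k - 1 ≤ k), show k - (k-1) = 1 by omega,
        Nat.choose_one_right]
    have hn1 : (n.factorial : ℝ) = n * (n-1).factorial := by
      exact_mod_cast (Nat.mul_factorial_pred (by omega)).symm
    have hr : ((m - n - (k-1)).factorial : ℝ)
        = ((m:ℝ) - n - k + 1) * ((m - n - k).factorial : ℝ) := by
      rw [show m - n - (k-1) = (m - n - k) + 1 by omega, Nat.factorial_succ]
      push_cast [Nat.cast_sub hkmn, Nat.cast_sub hnm]
      ring
    rw [ha]
    simp only [show n - k + (k-1) = n - 1 by omega, hch, hr, hn1]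
    have h1 : ((n-1).factorial : ℝ) ≠ 0 := by positivity
    have h2 : ((m - n - k).factorial : ℝ) ≠ 0 := by positivity
    field_simp
  have hakne : a k ≠ 0 := by
    rw [hak]
    have : (0:ℝ) < ((m - n).factorial : ℝ) / ((m - n - k).factorial : ℝ) :=
      div_pos (by positivity) (by positivity)
    positivity
  -- roots / degree facts
  have hpne : p ≠ 0 := by
    intro h; rw [h] at hA; simp at hA; exact hakne hA.symm
  have hcard : p.roots.card = k := by
    rw [hroots]; simp
  have hdeg : p.natDegree = k := by
    refine le_antisymm ?_ (hcard ▸ p.card_roots')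
    rw [hp]
    refine natDegree_sum_le_of_forall_le _ _ fun i hi => ?_
    rw [Finset.mem_range] at hi
    calc (C (a i) * X ^ i * (1 - X) ^ (k - i)).natDegree
        ≤ (C (a i) * X ^ i).natDegree + ((1 - X : ℝ[X]) ^ (k - i)).natDegree :=
          natDegree_mul_le
      _ ≤ ((C (a i)).natDegree + (X ^ i : ℝ[X]).natDegree) + (k - i) * (1 - X : ℝ[X]).natDegree :=
          add_le_add natDegree_mul_le (natDegree_pow_le)
      _ ≤ (0 + i) + (k - i) * 1 := by
          gcongr
          · exact le_of_eq (natDegree_C _)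
          · exact le_of_eq (natDegree_X_pow i)
          · exact le_trans (natDegree_sub_le _ _) (by simp)
      _ ≤ k := by omega
  have hfac : C p.leadingCoeff * ∏ i, (X - C (lam i)) = p := by
    have := Polynomial.C_leadingCoeff_mul_prod_multiset_X_sub_C (p := p) (by rw [hcard, hdeg])
    rwa [hroots, Multiset.map_map, ← Finset.prod_eq_multiset_prod] at this
  set L := p.leadingCoeff with hL
  have hevalP : L * ∏ i, (1 - lam i) = a k := by
    have := congrArg (eval 1) hfac
    simpa [eval_prod] using this.trans hA
  have hevalD : L * ∑ j, ∏ i ∈ univ.erase j, (1 - lam i) = k * a k - a (k - 1) := by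
    have hd : derivative p = C L * ∑ j, ∏ i ∈ univ.erase j, (X - C (lam i)) := by
      rw [← hfac, derivative_C_mul, deriv_prod_lin]
    have := congrArg (eval 1) hd
    rw [hB] at this
    simpa [eval_finset_sum, eval_prod] using this.symm
  -- positivity of 1 - lam i
  have ht : ∀ i, 0 < 1 - lam i := fun i => by have := (h01 i).2; linarith
  have hP : (0:ℝ) < ∏ i, (1 - lam i) := Finset.prod_pos fun i _ => ht i
  have hLne : L ≠ 0 := by
    intro h; rw [h, zero_mul] at hevalP; exact hakne hevalP.symm
  -- sum of inverses
  have hsum : ∑ i, (1 - lam i)⁻¹ =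
      (∑ j, ∏ i ∈ univ.erase j, (1 - lam i)) / ∏ i, (1 - lam i) := by
    rw [Finset.sum_div]
    refine Finset.sum_congr rfl fun j _ => ?_
    rw [eq_div_iff hP.ne', inv_mul_eq_div, div_eq_iff (ht j).ne']
    rw [← Finset.prod_erase_mul univ _ (Finset.mem_univ j)]
  have key := mul_div_mul_left (∑ j, ∏ i ∈ univ.erase j, (1 - lam i))
    (∏ i, (1 - lam i)) hLne
  rw [hevalP, hevalD] at key
  rw [hsum, ← key, hak, hak1]
  -- final arithmetic
  have he : (-1:ℝ)^k = -(-1:ℝ)^(k-1) := by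
    conv_lhs => rw [show k = (k-1)+1 by omega]
    rw [pow_succ]
    ring
  rw [he]
  have hFne : (((m - n).factorial : ℝ) / ((m - n - k).factorial : ℝ)) ≠ 0 :=
    (div_pos (by positivity) (by positivity)).ne'
  have hene : (-1:ℝ)^(k-1) ≠ 0 := by positivity
  field_simp
  ring
end

section
/- Let k, m, n be integers with 2 ≤ k ≤ n and m ≥ n + k, and suppose λ ∈ (0,1) satisfies the inequality 1/(k·(m-k+1)/(m-n-k+1) - 1 - (k-1)/(1-λ)) ≤ (k/(k-1))·(m-k+1)/(n-k+1) - (1/(k-1))·(1/λ) - 1, where additionally k·(m-k+1)/(m-n-k+1) - 1 - (k-1)/(1-λ) > 0. Then λ ≥ (n-k+1)/(α·k(m-n) + n-k+1), where α = 1/2 + (1/2)·√(1 - h_1(m,n,k)) and h_1(m,n,k) = 4·((k-1)/k²)·(1 - (k-1)(m-k+1)/((m-n)n)). -/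
set_option maxHeartbeats 2000000



private lemma stmt_10_aux (E c n v u lam : ℝ) (hE : 0 < E) (hn : 0 < n) (hl : 0 < lam)
    (hu : 0 ≤ u)
    (husq : (n * u) ^ 2 = (n * (v + 2 * c)) ^ 2 - 4 * E * n * c)
    (hquad : E * lam ^ 2 - n * (v + 2 * c) * lam + n * c ≤ 0) :
    c ≤ lam * ((v + u) / 2 + c) := by
  have h5 : E * (E * lam ^ 2 - n * (v + 2 * c) * lam + n * c) ≤ 0 :=
    mul_nonpos_of_nonneg_of_nonpos hE.le hquad
  have hnu : 0 ≤ n * u := mul_nonneg hn.le hu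
  have hsq : (n * (v + 2 * c) - 2 * E * lam) ^ 2 ≤ (n * u) ^ 2 := by nlinarith [h5, husq]
  have hbound : n * (v + 2 * c) - 2 * E * lam ≤ n * u := by nlinarith [hsq, hnu]
  nlinarith [hquad, mul_le_mul_of_nonneg_right hbound hl.le, hn, hl]

/-- Quadratic-inequality step: for `2 ≤ k ≤ n`, `m ≥ n+k`, if `λ ∈ (0,1)` satisfies
`1/(k(m-k+1)/(m-n-k+1) - 1 - (k-1)/(1-λ)) ≤ (k/(k-1))(m-k+1)/(n-k+1) - (1/(k-1))(1/λ) - 1`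
with the denominator `k(m-k+1)/(m-n-k+1) - 1 - (k-1)/(1-λ)` positive, then
`λ ≥ (n-k+1)/(α k(m-n) + n-k+1)` with `α = 1/2 + (1/2)√(1 - h₁(m,n,k))` and
`h₁(m,n,k) = 4((k-1)/k²)(1 - (k-1)(m-k+1)/((m-n)n))`. -/
theorem stmt_10 (k n m : ℕ) (hk : 2 ≤ k) (hkn : k ≤ n) (hm : n + k ≤ m)
    (lam : ℝ) (hlam : lam ∈ Set.Ioo (0 : ℝ) 1)
    (hpos : 0 < (k : ℝ) * ((m : ℝ) - k + 1) / ((m : ℝ) - n - k + 1) - 1 -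
      ((k : ℝ) - 1) / (1 - lam))
    (hineq : 1 / ((k : ℝ) * ((m : ℝ) - k + 1) / ((m : ℝ) - n - k + 1) - 1 -
        ((k : ℝ) - 1) / (1 - lam)) ≤
      ((k : ℝ) / ((k : ℝ) - 1)) * (((m : ℝ) - k + 1) / ((n : ℝ) - k + 1)) -
        (1 / ((k : ℝ) - 1)) * (1 / lam) - 1) :
    lam ≥ ((n : ℝ) - k + 1) /
      ((1 / 2 + 1 / 2 * Real.sqrt (1 - 4 * (((k : ℝ) - 1) / (k : ℝ) ^ 2) *
          (1 - ((k : ℝ) - 1) * ((m : ℝ) - k + 1) / (((m : ℝ) - n) * n)))) *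
        (k * ((m : ℝ) - n)) + ((n : ℝ) - k + 1)) := by
  obtain ⟨hl0, hl1⟩ := hlam
  have hK2 : (2:ℝ) ≤ (k:ℝ) := by exact_mod_cast hk
  have hKN : (k:ℝ) ≤ (n:ℝ) := by exact_mod_cast hkn
  have hMnk : (n:ℝ) + (k:ℝ) ≤ (m:ℝ) := by exact_mod_cast hm
  set K := (k:ℝ) with hKdef
  set N := (n:ℝ) with hNdef
  set M := (m:ℝ) with hMdef
  have hw : (2:ℝ) ≤ M - N := by linarith
  have hb : (0:ℝ) < M - N - K + 1 := by linarith
  have hc : (0:ℝ) < N - K + 1 := by linarith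
  have ha : (0:ℝ) < M - K + 1 := by linarith
  have hK1 : (0:ℝ) < K - 1 := by linarith
  have hN0 : (0:ℝ) < N := by linarith
  have hK0 : (0:ℝ) < K := by linarith
  have h1l : (0:ℝ) < 1 - lam := by linarith
  have hw0 : (0:ℝ) < M - N := by linarith
  -- Step 1: turn the hypothesis into a polynomial inequality
  have h2 : 1 ≤ (K / (K - 1) * ((M - K + 1) / (N - K + 1)) - 1 / (K - 1) * (1 / lam) - 1)
      * (K * (M - K + 1) / (M - N - K + 1) - 1 - (K - 1) / (1 - lam)) :=
    (div_le_iff₀ hpos).mp hineq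
  have e1 : (K * (M - K + 1) / (M - N - K + 1) - 1 - (K - 1) / (1 - lam))
      * ((M - N - K + 1) * (1 - lam))
      = (K * (M - K + 1) - (M - N - K + 1)) * (1 - lam) - (K - 1) * (M - N - K + 1) := by
    field_simp
  have e2 : (K / (K - 1) * ((M - K + 1) / (N - K + 1)) - 1 / (K - 1) * (1 / lam) - 1)
      * ((K - 1) * (N - K + 1) * lam)
      = K * (M - K + 1) * lam - (N - K + 1) - (K - 1) * (N - K + 1) * lam := by
    field_simp
  have hP : (0:ℝ) < ((K - 1) * (N - K + 1) * lam) * ((M - N - K + 1) * (1 - lam)) :=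
    mul_pos (mul_pos (mul_pos hK1 hc) hl0) (mul_pos hb h1l)
  have h3 : ((K - 1) * (N - K + 1) * lam) * ((M - N - K + 1) * (1 - lam)) ≤
      ((K / (K - 1) * ((M - K + 1) / (N - K + 1)) - 1 / (K - 1) * (1 / lam) - 1)
        * ((K - 1) * (N - K + 1) * lam))
      * ((K * (M - K + 1) / (M - N - K + 1) - 1 - (K - 1) / (1 - lam))
        * ((M - N - K + 1) * (1 - lam))) := by
    calc ((K - 1) * (N - K + 1) * lam) * ((M - N - K + 1) * (1 - lam))
        = 1 * (((K - 1) * (N - K + 1) * lam) * ((M - N - K + 1) * (1 - lam))) := by ring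
      _ ≤ ((K / (K - 1) * ((M - K + 1) / (N - K + 1)) - 1 / (K - 1) * (1 / lam) - 1)
            * (K * (M - K + 1) / (M - N - K + 1) - 1 - (K - 1) / (1 - lam)))
          * (((K - 1) * (N - K + 1) * lam) * ((M - N - K + 1) * (1 - lam))) :=
        mul_le_mul_of_nonneg_right h2 hP.le
      _ = _ := by ring
  rw [e1, e2] at h3
  -- Step 2: the quadratic inequality in lam
  have h4 : K * ((M - K + 1) * ((K - 1) * (M - N) + N) * lam ^ 2
      - N * (K * (M - N) + 2 * (N - K + 1)) * lam + N * (N - K + 1)) ≤ 0 := by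
    linarith [h3]
  have hquad : (M - K + 1) * ((K - 1) * (M - N) + N) * lam ^ 2
      - N * (K * (M - N) + 2 * (N - K + 1)) * lam + N * (N - K + 1) ≤ 0 := by
    nlinarith [h4, hK0]
  -- Step 3: the square root
  have h1h : (0:ℝ) ≤ 1 - 4 * ((K - 1) / K ^ 2) * (1 - (K - 1) * (M - K + 1) / ((M - N) * N)) := by
    have key : 1 - 4 * ((K - 1) / K ^ 2) * (1 - (K - 1) * (M - K + 1) / ((M - N) * N))
        = ((K - 2) ^ 2 * (M - N) ^ 2 * N + 4 * (K - 1) ^ 2 * (M - K + 1) * (M - N))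
          / (K ^ 2 * (M - N) ^ 2 * N) := by
      field_simp
      ring
    rw [key]
    apply div_nonneg
    · have t1 : (0:ℝ) ≤ (K - 2) ^ 2 * (M - N) ^ 2 * N :=
        mul_nonneg (mul_nonneg (sq_nonneg _) (sq_nonneg _)) hN0.le
      have t2 : (0:ℝ) ≤ 4 * (K - 1) ^ 2 * (M - K + 1) * (M - N) :=
        mul_nonneg (mul_nonneg (by positivity) ha.le) hw0.le
      linarith
    · exact mul_nonneg (mul_nonneg (sq_nonneg _) (sq_nonneg _)) hN0.le
  set s := Real.sqrt (1 - 4 * ((K - 1) / K ^ 2) *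
      (1 - (K - 1) * (M - K + 1) / ((M - N) * N))) with hsdef
  have hs0 : 0 ≤ s := Real.sqrt_nonneg _
  have hs2 : s ^ 2 = 1 - 4 * ((K - 1) / K ^ 2) *
      (1 - (K - 1) * (M - K + 1) / ((M - N) * N)) := Real.sq_sqrt h1h
  have husq : (N * (s * (K * (M - N)))) ^ 2
      = (N * (K * (M - N) + 2 * (N - K + 1))) ^ 2
        - 4 * ((M - K + 1) * ((K - 1) * (M - N) + N)) * N * (N - K + 1) := by
    have hid : N ^ 2 * ((1 - 4 * ((K - 1) / K ^ 2) *
          (1 - (K - 1) * (M - K + 1) / ((M - N) * N)))) * (K * (M - N)) ^ 2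
        = (N * (K * (M - N) + 2 * (N - K + 1))) ^ 2
          - 4 * ((M - K + 1) * ((K - 1) * (M - N) + N)) * N * (N - K + 1) := by
      field_simp
      ring
    calc (N * (s * (K * (M - N)))) ^ 2
        = N ^ 2 * s ^ 2 * (K * (M - N)) ^ 2 := by ring
      _ = N ^ 2 * ((1 - 4 * ((K - 1) / K ^ 2) *
            (1 - (K - 1) * (M - K + 1) / ((M - N) * N)))) * (K * (M - N)) ^ 2 := by
          rw [hs2]
      _ = _ := hid
  have hKw : (0:ℝ) < K * (M - N) := mul_pos hK0 hw0
  have hE : (0:ℝ) < (M - K + 1) * ((K - 1) * (M - N) + N) := by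
    have t : (0:ℝ) < (K - 1) * (M - N) := mul_pos hK1 hw0
    exact mul_pos ha (by linarith only [t, hN0])
  have hu0 : (0:ℝ) ≤ s * (K * (M - N)) := mul_nonneg hs0 hKw.le
  have main := stmt_10_aux ((M - K + 1) * ((K - 1) * (M - N) + N)) (N - K + 1) N
    (K * (M - N)) (s * (K * (M - N))) lam hE hN0 hl0 hu0 husq hquad
  have hDg : (0:ℝ) < (1 / 2 + 1 / 2 * s) * (K * (M - N)) + (N - K + 1) := by
    have t : (0:ℝ) ≤ s * (K * (M - N)) := hu0
    nlinarith only [hKw, hc, t]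
  rw [ge_iff_le, div_le_iff₀ hDg]
  linarith only [main]
end

section
/- Let A ∈ ℝ^{n×m} with A A^T = I_n, m > k ≥ 2, and n = 2. Then there exists S₀ ⊆ [m] with |S₀| = k such that σ_min(A_{S₀})² ≥ (k - √(k(m-k)/(m-1)))/m, where σ_min(A_{S₀}) = min_{‖x‖=1, x∈ℝ²} ‖(A_{S₀})^T x‖. -/
open Matrix

/-- `σ_min(M)` : the minimum over unit vectors `x ∈ ℝ²` of `‖Mᵀ x‖`. -/
noncomputable def sigmaMin2 {α : Type*} [Fintype α] (M : Matrix (Fin 2) α ℝ) : ℝ :=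
  sInf {r : ℝ | ∃ x : EuclideanSpace ℝ (Fin 2), ‖x‖ = 1 ∧
    r = ‖(WithLp.equiv 2 (α → ℝ)).symm (Mᵀ.mulVec ((WithLp.equiv 2 (Fin 2 → ℝ)) x))‖}

open Finset


lemma Lpair {ι : Type*} [DecidableEq ι] (V : Finset ι) (q : ℕ) (F : ι → Finset ι → ℝ) :
    ∑ R ∈ V.powersetCard (q+1), ∑ l ∈ R, F l (R.erase l)
      = ∑ l ∈ V, ∑ R' ∈ (V.erase l).powersetCard q, F l R' := by
  rw [Finset.sum_sigma', Finset.sum_sigma']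
  refine Finset.sum_nbij' (fun p => ⟨p.2, p.1.erase p.2⟩) (fun p => ⟨insert p.1 p.2, p.1⟩)
    ?_ ?_ ?_ ?_ ?_
  · rintro ⟨R, l⟩ hp
    simp only [Finset.mem_sigma, Finset.mem_powersetCard] at hp ⊢
    obtain ⟨⟨hRV, hcard⟩, hlR⟩ := hp
    refine ⟨hRV hlR, Finset.erase_subset_erase _ hRV, ?_⟩
    rw [Finset.card_erase_of_mem hlR, hcard]; omega
  · rintro ⟨l, R'⟩ hp
    simp only [Finset.mem_sigma, Finset.mem_powersetCard] at hp ⊢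
    obtain ⟨hlV, hR', hcard⟩ := hp
    have hlR' : l ∉ R' := fun h => (Finset.mem_erase.mp (hR' h)).1 rfl
    refine ⟨⟨?_, ?_⟩, Finset.mem_insert_self _ _⟩
    · exact Finset.insert_subset hlV (hR'.trans (Finset.erase_subset _ _))
    · rw [Finset.card_insert_of_notMem hlR', hcard]
  · rintro ⟨R, l⟩ hp
    simp only [Finset.mem_sigma, Finset.mem_powersetCard] at hp
    exact Sigma.ext (by simp [Finset.insert_erase hp.2]) (by simp)
  · rintro ⟨l, R'⟩ hp
    simp only [Finset.mem_sigma, Finset.mem_powersetCard] at hp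
    have hlR' : l ∉ R' := fun h => (Finset.mem_erase.mp (hp.2.1 h)).1 rfl
    exact Sigma.ext (by simp) (by simp [Finset.erase_insert hlR'])
  · rintro ⟨R, l⟩ _; rfl

lemma chooseId (n q : ℕ) : ((n+1 : ℕ):ℝ) * ((n).choose q) = ((q+1 : ℕ):ℝ) * ((n+1).choose (q+1)) := by
  have h := Nat.add_one_mul_choose_eq n q
  have h2 : (n+1) * n.choose q = (q+1) * ((n+1).choose (q+1)) := by
    simpa [Nat.succ_eq_add_one, mul_comm] using h
  exact_mod_cast congrArg (Nat.cast : ℕ → ℝ) h2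

lemma Lsum2 {ι : Type*} [DecidableEq ι] (V : Finset ι) (q : ℕ) (f : ι → ℝ) :
    ∑ R ∈ V.powersetCard q, ∑ l ∈ R, f l
      = (q : ℝ) / (V.card : ℝ) * (V.card.choose q : ℝ) * ∑ l ∈ V, f l := by
  cases q with
  | zero => simp
  | succ q' =>
    have h1 : ∑ R ∈ V.powersetCard (q'+1), ∑ l ∈ R, f l
        = ∑ l ∈ V, ∑ R' ∈ (V.erase l).powersetCard q', f l := Lpair V q' (fun l _ => f l)
    rw [h1]
    have h2 : ∀ l ∈ V, ∑ R' ∈ (V.erase l).powersetCard q', f l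
        = ((q'+1 : ℕ):ℝ) / (V.card : ℝ) * (V.card.choose (q'+1) : ℝ) * f l := by
      intro l hl
      rw [Finset.sum_const, Finset.card_powersetCard, Finset.card_erase_of_mem hl,
        nsmul_eq_mul]
      obtain ⟨n, hn⟩ : ∃ n, V.card = n + 1 :=
        ⟨V.card - 1, (Nat.succ_pred_eq_of_pos (Finset.card_pos.mpr ⟨l, hl⟩)).symm⟩
      rw [hn]
      simp only [Nat.add_sub_cancel]
      have := chooseId n q'
      have hpos : ((n+1:ℕ):ℝ) ≠ 0 := by positivity
      push_cast at this ⊢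
      field_simp
      linear_combination f l * this
    rw [Finset.sum_congr rfl h2, ← Finset.mul_sum]
    try push_cast
    try ring

lemma Lsum3 {ι : Type*} [DecidableEq ι] (V : Finset ι) (q : ℕ) (h : ι → ι → ℝ) (hdiag : ∀ l, h l l = 0) :
    ∑ R ∈ V.powersetCard q, ∑ l ∈ R, ∑ l' ∈ R, h l l'
      = (q:ℝ)*((q:ℝ)-1) / ((V.card:ℝ)*((V.card:ℝ)-1)) * (V.card.choose q : ℝ)
        * ∑ l ∈ V, ∑ l' ∈ V, h l l' := by
  match q with
  | 0 => norm_num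
  | 1 =>
    have hz : ∀ R ∈ V.powersetCard 1, ∑ l ∈ R, ∑ l' ∈ R, h l l' = 0 := by
      intro R hR
      obtain ⟨x, rfl⟩ := Finset.card_eq_one.mp (Finset.mem_powersetCard.mp hR).2
      simp [hdiag]
    rw [Finset.sum_eq_zero hz]
    norm_num
  | (q''+2) =>
    have e1 : ∀ R ∈ V.powersetCard (q''+2), ∑ l ∈ R, ∑ l' ∈ R, h l l'
        = ∑ l ∈ R, ∑ l' ∈ R.erase l, h l l' := by
      intro R _
      refine Finset.sum_congr rfl fun l _ => ?_
      exact (Finset.sum_erase _ (hdiag l)).symm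
    rw [Finset.sum_congr rfl e1, Lpair V (q''+1) (fun l R' => ∑ l' ∈ R', h l l')]
    have e2 : ∀ l ∈ V, ∑ R' ∈ (V.erase l).powersetCard (q''+1), ∑ l' ∈ R', h l l'
        = ((q''+1:ℕ):ℝ) / (((V.card:ℝ)-1)) * (((V.card - 1).choose (q''+1) : ℕ):ℝ)
          * ∑ l' ∈ V, h l l' := by
      intro l hl
      rw [Lsum2 (V.erase l) (q''+1) (fun l' => h l l'), Finset.card_erase_of_mem hl,
        Finset.sum_erase _ (hdiag l)]
      have h1 : (1:ℕ) ≤ V.card := Finset.card_pos.mpr ⟨l, hl⟩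
      congr 2
      · push_cast [Nat.cast_sub h1]
        norm_num
    rw [Finset.sum_congr rfl e2, ← Finset.mul_sum]
    -- coefficient identity
    obtain ⟨n, hn⟩ | h0 : (∃ n, V.card = n + 1) ∨ V.card = 0 := by
      rcases Nat.eq_zero_or_pos V.card with h0 | hp
      · exact Or.inr h0
      · exact Or.inl ⟨V.card - 1, (Nat.succ_pred_eq_of_pos hp).symm⟩
    · rw [hn]
      simp only [Nat.add_sub_cancel]
      rcases Nat.eq_zero_or_pos n with rfl | hnp
      · norm_num
      · have key : ((n+1:ℕ):ℝ) * ((n).choose (q''+1)) = ((q''+2 : ℕ):ℝ) * ((n+1).choose (q''+2)) := by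
          have h2 : (n+1) * n.choose (q''+1) = (q''+2) * ((n+1).choose (q''+2)) := by
            simpa [Nat.succ_eq_add_one, mul_comm] using Nat.add_one_mul_choose_eq n (q''+1)
          exact_mod_cast congrArg (Nat.cast : ℕ → ℝ) h2
        have hne : ((n:ℕ):ℝ) ≠ 0 := by positivity
        have hne1 : ((n:ℕ):ℝ) + 1 ≠ 0 := by positivity
        push_cast at key ⊢
        field_simp
        rw [div_left_inj' (by simpa using hne)]
        linear_combination (((q'':ℝ)+1) * (∑ l ∈ V, ∑ l' ∈ V, h l l')) * key
    · -- V empty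
      have : V = ∅ := Finset.card_eq_zero.mp h0
      subst this
      simp


lemma mul_cancel_nonneg {A x : ℝ} (hA : 0 < A) (h : 0 ≤ A * x) : 0 ≤ x :=
  le_of_mul_le_mul_left (by simpa using h) hA

set_option maxHeartbeats 1000000 in
lemma coreDisc (α β τ d e c s : ℝ) (hγ : α < 1) (hA0 : 0 ≤ α^2 - β) (hG0 : 0 ≤ 1 - 2*α + β)
    (hdisc : 0 ≤ τ^2 - 4*d) (hc : 0 ≤ c) (hQ : (τ*c - 2*e)^2 ≤ (τ^2-4*d)*c^2)
    (hs : s * (1-α) = (α^2-β)*(2-τ) + (1-2*α+β)*Real.sqrt (τ^2-4*d)) :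
    ((1-α)*c - s)^2 ≤ ((1-α)*(τ+c) + 2*α)^2
      - 4*(d + (1-α)*e + α*(τ-2*d) + (α-β)*(c-e) + β*(1-τ+d)) := by
  set Δ := Real.sqrt (τ^2-4*d) with hΔdef
  have hΔ2 : Δ^2 = τ^2-4*d := Real.sq_sqrt hdisc
  have hΔ0 : 0 ≤ Δ := Real.sqrt_nonneg _
  have habs : |τ*c - 2*e| ≤ Δ*c := by
    rw [← Real.sqrt_sq_eq_abs]
    calc Real.sqrt ((τ*c-2*e)^2) ≤ Real.sqrt ((Δ*c)^2) := by
          apply Real.sqrt_le_sqrt; nlinarith [hΔ2]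
      _ = Δ*c := Real.sqrt_sq (mul_nonneg hΔ0 hc)
  have h1 : 0 ≤ τ*c - 2*e + Δ*c := by
    have := neg_abs_le (τ*c - 2*e)
    linarith
  have t1 : 0 ≤ 2*(1-α)^2*((1-2*α+β) * (τ*c - 2*e + Δ*c)) := by
    have := mul_nonneg hG0 h1
    positivity
  have t2 : 0 ≤ (α^2-β) * ((1-2*α+β) * ((2-τ) - Δ)^2) :=
    mul_nonneg hA0 (mul_nonneg hG0 (sq_nonneg _))
  have h1α : (0:ℝ) < 1 - α := by linarith
  have hγ2 : 0 < (1-α)^2 := by positivity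
  have key : (1-α)^2 * ((1-α)^2 * ( (((1-α)*(τ+c) + 2*α)^2
      - 4*(d + (1-α)*e + α*(τ-2*d) + (α-β)*(c-e) + β*(1-τ+d))) - ((1-α)*c - s)^2 ))
      = (1-α)^2 * (2*(1-α)^2*((1-2*α+β)*(τ*c-2*e+Δ*c)) + (α^2-β)*((1-2*α+β)*((2-τ)-Δ)^2)) := by
    linear_combination
      ((-1)*s + (-1)*Δ + 2*c + 2*β + (-1)*β*Δ + (-1)*β*τ + 3*α*s + 4*α*Δ + (-8)*α*c + (-4)*α*β
        + 2*α*β*Δ + 2*α*β*τ + (-2)*α^2 + (-3)*α^2*s + (-5)*α^2*Δ + 12*α^2*c + 1*α^2*τ + 2*α^2*β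
        + (-1)*α^2*β*Δ + (-1)*α^2*β*τ + 4*α^3 + 1*α^3*s + 2*α^3*Δ + (-8)*α^3*c + (-2)*α^3*τ
        + (-2)*α^4 + 2*α^4*c + 1*α^4*τ) * hs
      + ((-1) + (-1)*β + 6*α + 4*α*β + (-14)*α^2 + (-6)*α^2*β + 16*α^3 + 4*α^3*β + (-9)*α^4
        + (-1)*α^4*β + 2*α^5) * hΔ2
  have h2 := mul_cancel_nonneg hγ2 (key ▸ (mul_nonneg hγ2.le (add_nonneg t1 t2)))
  have h3 := mul_cancel_nonneg hγ2 h2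
  linarith

lemma stepCore {ι : Type*} (U : Finset ι) (hU : U.Nonempty)
    (n1 N B C rr μ Γ σ : ℝ) (Bi Ci ci : ι → ℝ)
    (hn1 : 0 < n1) (hN : 0 < N) (hrr : 0 < rr)
    (hD : ∀ i ∈ U, (Γ * ci i - σ)^2 ≤ Bi i^2 - 4*n1*Ci i)
    (hpair : ∀ i ∈ U, ∀ i' ∈ U, Bi i - Bi i' = Γ*(ci i - ci i'))
    (hsN : (U.card : ℝ) * n1 = rr * N)
    (hsB : ∑ i ∈ U, Bi i = rr * B)
    (hsC : ∑ i ∈ U, Ci i = rr * C)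
    (hInv1 : 0 ≤ N*μ^2 - B*μ + C) (hInv2 : 2*N*μ ≤ B) :
    ∃ i ∈ U, (0 ≤ n1*μ^2 - Bi i*μ + Ci i ∧ 2*n1*μ ≤ Bi i) := by
  obtain ⟨i₀, hi₀, hmax⟩ := U.exists_max_image (fun i => Bi i - Real.sqrt (Bi i^2 - 4*n1*Ci i)) hU
  set z : ℝ := (Bi i₀ - Real.sqrt (Bi i₀^2 - 4*n1*Ci i₀)) / (2*n1) with hzdef
  have h2n1 : (0:ℝ) < 2*n1 := by linarith
  have hz2 : 2*n1*z = Bi i₀ - Real.sqrt (Bi i₀^2 - 4*n1*Ci i₀) := by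
    rw [hzdef]; field_simp
  have hDnn : ∀ i ∈ U, 0 ≤ Bi i^2 - 4*n1*Ci i := fun i hi => le_trans (sq_nonneg _) (hD i hi)
  have hsqD : ∀ i ∈ U, |Γ * ci i - σ| ≤ Real.sqrt (Bi i^2 - 4*n1*Ci i) := by
    intro i hi
    rw [← Real.sqrt_sq_eq_abs]
    exact Real.sqrt_le_sqrt (hD i hi)
  -- every child polynomial is ≤ 0 at z
  have hchild : ∀ i ∈ U, n1*z^2 - Bi i*z + Ci i ≤ 0 := by
    intro i hi
    have hsq : 0 ≤ Real.sqrt (Bi i^2 - 4*n1*Ci i) := Real.sqrt_nonneg _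
    have hleft : Bi i - Real.sqrt (Bi i^2 - 4*n1*Ci i) ≤ 2*n1*z := by
      rw [hz2]; exact hmax i hi
    have hright : 2*n1*z ≤ Bi i + Real.sqrt (Bi i^2 - 4*n1*Ci i) := by
      rw [hz2]
      have hp := hpair i₀ hi₀ i hi
      have h₁ := hsqD i hi
      have h₂ := hsqD i₀ hi₀
      have := le_abs_self (Γ * ci i₀ - σ)
      have := neg_abs_le (Γ * ci i - σ)
      linarith
    have hsq2 : (2*n1*z - Bi i)^2 ≤ Bi i^2 - 4*n1*Ci i := by
      rw [← Real.sq_sqrt (hDnn i hi)]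
      apply sq_le_sq'
      · linarith
      · linarith
    nlinarith [hsq2, hn1]
  -- parent polynomial value at z is ≤ 0
  have hparent : N*z^2 - B*z + C ≤ 0 := by
    have hsum : ∑ i ∈ U, (n1*z^2 - Bi i*z + Ci i) ≤ 0 :=
      Finset.sum_nonpos hchild
    have hexp : ∑ i ∈ U, (n1*z^2 - Bi i*z + Ci i)
        = (U.card : ℝ)*n1*z^2 - (∑ i ∈ U, Bi i)*z + ∑ i ∈ U, Ci i := by
      rw [Finset.sum_add_distrib, Finset.sum_sub_distrib, Finset.sum_const, ← Finset.sum_mul]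
      push_cast; ring
    rw [hexp, hsN, hsB, hsC] at hsum
    nlinarith [hsum, hrr]
  -- z ≥ μ
  have hzμ : μ ≤ z := by
    by_contra hcon
    push_neg at hcon
    nlinarith [hparent, hInv1, hInv2, hN, mul_pos hN (sub_pos.mpr hcon)]
  refine ⟨i₀, hi₀, ?_, ?_⟩
  · have h2 : Real.sqrt (Bi i₀^2 - 4*n1*Ci i₀) ≤ Bi i₀ - 2*n1*μ := by
      have : 2*n1*μ ≤ 2*n1*z := by nlinarith
      linarith [hz2]
    have h3 : Bi i₀^2 - 4*n1*Ci i₀ ≤ (Bi i₀ - 2*n1*μ)^2 := by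
      rw [← Real.sq_sqrt (hDnn i₀ hi₀)]
      apply sq_le_sq'
      · linarith [Real.sqrt_nonneg (Bi i₀^2 - 4*n1*Ci i₀)]
      · exact h2
    nlinarith [h3, hn1]
  · have hsq : 0 ≤ Real.sqrt (Bi i₀^2 - 4*n1*Ci i₀) := Real.sqrt_nonneg _
    have : 2*n1*μ ≤ 2*n1*z := by nlinarith
    linarith [hz2]


def FF {m : ℕ} (k : ℕ) (T : Finset (Fin m)) : Finset (Finset (Fin m)) :=
  ((Finset.univ : Finset (Fin m)).powersetCard k).filter (fun S => T ⊆ S)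

lemma mem_FF {m : ℕ} {k : ℕ} {T S : Finset (Fin m)} : S ∈ FF k T ↔ S.card = k ∧ T ⊆ S := by
  simp [FF, Finset.mem_powersetCard, and_comm]

lemma reindexFF {m : ℕ} (k : ℕ) (T : Finset (Fin m)) (hT : T.card ≤ k) (g : Finset (Fin m) → ℝ) :
    ∑ S ∈ FF k T, g S = ∑ R ∈ (Finset.univ \ T).powersetCard (k - T.card), g (T ∪ R) := by
  refine Finset.sum_nbij' (fun S => S \ T) (fun R => T ∪ R) ?_ ?_ ?_ ?_ ?_
  · intro S hS
    obtain ⟨hcard, hTS⟩ := mem_FF.mp hS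
    rw [Finset.mem_powersetCard]
    constructor
    · exact Finset.sdiff_subset_sdiff (Finset.subset_univ S) le_rfl
    · rw [Finset.card_sdiff_of_subset hTS, hcard]
  · intro R hR
    rw [Finset.mem_powersetCard] at hR
    obtain ⟨hRU, hcard⟩ := hR
    have hdisj : Disjoint T R := by
      rw [Finset.disjoint_right]
      intro a haR
      exact (Finset.mem_sdiff.mp (hRU haR)).2
    rw [mem_FF]
    constructor
    · rw [Finset.card_union_of_disjoint hdisj, hcard]
      omega
    · exact Finset.subset_union_left
  · intro S hS
    exact Finset.union_sdiff_of_subset (mem_FF.mp hS).2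
  · intro R hR
    rw [Finset.mem_powersetCard] at hR
    have hdisj : Disjoint T R := by
      rw [Finset.disjoint_right]
      intro a haR
      exact (Finset.mem_sdiff.mp (hR.1 haR)).2
    exact Finset.union_sdiff_cancel_left hdisj
  · intro S hS
    rw [Finset.union_sdiff_of_subset (mem_FF.mp hS).2]

lemma childSum {m : ℕ} (k : ℕ) (T : Finset (Fin m)) (hTk : T.card ≤ k) (g : Finset (Fin m) → ℝ) :
    ∑ i ∈ Finset.univ \ T, ∑ S ∈ FF k (insert i T), g S
      = ((k - T.card : ℕ) : ℝ) * ∑ S ∈ FF k T, g S := by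
  have h1 : ∀ i, FF k (insert i T) = (FF k T).filter (fun S => i ∈ S) := by
    intro i
    ext S
    simp [mem_FF, Finset.insert_subset_iff, and_comm, and_assoc]
  calc ∑ i ∈ Finset.univ \ T, ∑ S ∈ FF k (insert i T), g S
      = ∑ i ∈ Finset.univ \ T, ∑ S ∈ FF k T, if i ∈ S then g S else 0 := by
        refine Finset.sum_congr rfl fun i _ => ?_
        rw [h1 i, Finset.sum_filter]
    _ = ∑ S ∈ FF k T, ∑ i ∈ Finset.univ \ T, if i ∈ S then g S else 0 := Finset.sum_comm
    _ = ∑ S ∈ FF k T, ((k - T.card : ℕ) : ℝ) * g S := by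
        refine Finset.sum_congr rfl fun S hS => ?_
        obtain ⟨hcard, hTS⟩ := mem_FF.mp hS
        rw [Finset.sum_ite_mem]
        have h2 : (Finset.univ \ T) ∩ S = S \ T := by
          ext a; simp [Finset.mem_sdiff, and_comm]
        rw [h2, Finset.sum_const, nsmul_eq_mul, Finset.card_sdiff_of_subset hTS, hcard]
    _ = ((k - T.card : ℕ) : ℝ) * ∑ S ∈ FF k T, g S := by rw [Finset.mul_sum]

noncomputable def tS {m : ℕ} (u v : Fin m → ℝ) (S : Finset (Fin m)) : ℝ :=
  ∑ l ∈ S, (u l^2 + v l^2)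

noncomputable def dS {m : ℕ} (u v : Fin m → ℝ) (S : Finset (Fin m)) : ℝ :=
  (∑ l ∈ S, u l^2) * (∑ l ∈ S, v l^2) - (∑ l ∈ S, u l * v l)^2

noncomputable def BT {m : ℕ} (k : ℕ) (u v : Fin m → ℝ) (T : Finset (Fin m)) : ℝ :=
  ∑ S ∈ FF k T, tS u v S

noncomputable def CT {m : ℕ} (k : ℕ) (u v : Fin m → ℝ) (T : Finset (Fin m)) : ℝ :=
  ∑ S ∈ FF k T, dS u v S

lemma childFormulas {m : ℕ} (k : ℕ) (u v : Fin m → ℝ)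
    (hu : ∑ l, u l^2 = 1) (hv : ∑ l, v l^2 = 1) (huv : ∑ l, u l * v l = 0)
    (hkm : k < m) (T : Finset (Fin m)) (hTk : T.card < k)
    (i : Fin m) (hi : i ∈ Finset.univ \ T) :
    ((FF k (insert i T)).card : ℝ) = (((m - T.card - 1).choose (k - T.card - 1) : ℕ) : ℝ)
    ∧ BT k u v (insert i T)
      = (((m - T.card - 1).choose (k - T.card - 1) : ℕ) : ℝ)
          * (((∑ l ∈ T, u l^2) + (∑ l ∈ T, v l^2)) + (u i^2 + v i^2))
        + ((k - T.card - 1 : ℕ):ℝ)/(((m - T.card : ℕ):ℝ)-1)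
          * (((m - T.card - 1).choose (k - T.card - 1) : ℕ) : ℝ)
          * (2 - ((∑ l ∈ T, u l^2) + (∑ l ∈ T, v l^2)) - (u i^2 + v i^2))
    ∧ CT k u v (insert i T)
      = (((m - T.card - 1).choose (k - T.card - 1) : ℕ) : ℝ)
          * (((∑ l ∈ T, u l^2) + u i^2) * ((∑ l ∈ T, v l^2) + v i^2)
             - ((∑ l ∈ T, u l * v l) + u i * v i)^2)
        + ((k - T.card - 1 : ℕ):ℝ)/(((m - T.card : ℕ):ℝ)-1)
          * (((m - T.card - 1).choose (k - T.card - 1) : ℕ) : ℝ)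
          * (((∑ l ∈ T, u l^2) + u i^2) * (1 - ((∑ l ∈ T, v l^2) + v i^2))
             + ((∑ l ∈ T, v l^2) + v i^2) * (1 - ((∑ l ∈ T, u l^2) + u i^2))
             + 2*((∑ l ∈ T, u l * v l) + u i * v i)^2)
        + ((k - T.card - 1 : ℕ):ℝ)*(((k - T.card - 1 : ℕ):ℝ)-1)
            /((((m - T.card : ℕ):ℝ)-1)*((((m - T.card : ℕ):ℝ)-1)-1))
          * (((m - T.card - 1).choose (k - T.card - 1) : ℕ) : ℝ)
          * ((1 - ((∑ l ∈ T, u l^2) + u i^2)) * (1 - ((∑ l ∈ T, v l^2) + v i^2))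
             - ((∑ l ∈ T, u l * v l) + u i * v i)^2) := by
  have hiT : i ∉ T := (Finset.mem_sdiff.mp hi).2
  have hcTi : (insert i T).card = T.card + 1 := Finset.card_insert_of_notMem hiT
  have hTm : T.card < m := by
    have := Finset.card_le_univ T
    simp only [Finset.card_univ, Fintype.card_fin] at this
    omega
  have hTik : (insert i T).card ≤ k := by omega
  have hsub : k - (insert i T).card = k - T.card - 1 := by omega
  have hdiffU : Finset.univ \ insert i T = (Finset.univ \ T).erase i := by
    ext a
    simp only [Finset.mem_sdiff, Finset.mem_insert, Finset.mem_univ, true_and,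
      Finset.mem_erase, not_or]
  have hUcard : (Finset.univ \ T).card = m - T.card := by
    rw [Finset.card_sdiff_of_subset (Finset.subset_univ T), Finset.card_univ, Fintype.card_fin]
  have hVcard : ((Finset.univ \ T).erase i).card = m - T.card - 1 := by
    rw [Finset.card_erase_of_mem hi, hUcard]
  have hVcast : (((m - T.card - 1 : ℕ)):ℝ) = ((m - T.card : ℕ):ℝ) - 1 := by
    have h1 : (1:ℕ) ≤ m - T.card := by omega
    push_cast [Nat.cast_sub h1]
    ring
  have hdisjR : ∀ R ∈ ((Finset.univ \ T).erase i).powersetCard (k - T.card - 1),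
      Disjoint (insert i T) R := by
    intro R hR
    rw [Finset.mem_powersetCard] at hR
    rw [Finset.disjoint_right]
    intro a haR
    have h2 := hR.1 haR
    rw [Finset.mem_erase, Finset.mem_sdiff] at h2
    simp only [Finset.mem_insert]
    push_neg
    exact ⟨h2.1, h2.2.2⟩
  -- component sums over V
  have hVu : ∑ l ∈ (Finset.univ \ T).erase i, u l^2 = 1 - (∑ l ∈ T, u l^2) - u i^2 := by
    rw [Finset.sum_erase_eq_sub hi, Finset.sum_sdiff_eq_sub (Finset.subset_univ T), hu]
  have hVv : ∑ l ∈ (Finset.univ \ T).erase i, v l^2 = 1 - (∑ l ∈ T, v l^2) - v i^2 := by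
    rw [Finset.sum_erase_eq_sub hi, Finset.sum_sdiff_eq_sub (Finset.subset_univ T), hv]
  have hVuv : ∑ l ∈ (Finset.univ \ T).erase i, (u l * v l)
      = - (∑ l ∈ T, u l * v l) - u i * v i := by
    rw [Finset.sum_erase_eq_sub hi, Finset.sum_sdiff_eq_sub (Finset.subset_univ T), huv]
    ring
  refine ⟨?_, ?_, ?_⟩
  · -- cardinality
    have h := reindexFF k (insert i T) hTik (fun _ => (1:ℝ))
    rw [hdiffU, hsub] at h
    simp only [Finset.sum_const, nsmul_eq_mul, mul_one] at h
    rw [h, Finset.card_powersetCard, hVcard]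
  · -- B formula
    have h := reindexFF k (insert i T) hTik (tS u v)
    rw [hdiffU, hsub] at h
    have hsplit : ∀ R ∈ ((Finset.univ \ T).erase i).powersetCard (k - T.card - 1),
        tS u v (insert i T ∪ R) = tS u v (insert i T) + ∑ l ∈ R, (u l^2 + v l^2) := by
      intro R hR
      simp only [tS]
      rw [Finset.sum_union (hdisjR R hR)]
    rw [BT, h, Finset.sum_congr rfl hsplit, Finset.sum_add_distrib, Finset.sum_const,
      Lsum2, Finset.card_powersetCard, hVcard, hVcast, nsmul_eq_mul]
    have htTi : tS u v (insert i T)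
        = ((∑ l ∈ T, u l^2) + (∑ l ∈ T, v l^2)) + (u i^2 + v i^2) := by
      simp only [tS]
      rw [Finset.sum_insert hiT, Finset.sum_add_distrib]
      ring
    have hVc : ∑ l ∈ (Finset.univ \ T).erase i, (u l^2 + v l^2)
        = 2 - ((∑ l ∈ T, u l^2) + (∑ l ∈ T, v l^2)) - (u i^2 + v i^2) := by
      rw [Finset.sum_add_distrib, hVu, hVv]
      ring
    rw [htTi, hVc]
  · -- C formula
    have h := reindexFF k (insert i T) hTik (dS u v)
    rw [hdiffU, hsub] at h
    have hp1 : ∑ l ∈ insert i T, u l^2 = (∑ l ∈ T, u l^2) + u i^2 := by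
      rw [Finset.sum_insert hiT]; ring
    have hr1 : ∑ l ∈ insert i T, v l^2 = (∑ l ∈ T, v l^2) + v i^2 := by
      rw [Finset.sum_insert hiT]; ring
    have hq1 : ∑ l ∈ insert i T, (u l * v l) = (∑ l ∈ T, u l * v l) + u i * v i := by
      rw [Finset.sum_insert hiT]; ring
    have hsplit : ∀ R ∈ ((Finset.univ \ T).erase i).powersetCard (k - T.card - 1),
        dS u v (insert i T ∪ R)
          = ((∑ l ∈ T, u l^2 ) + u i^2) * ((∑ l ∈ T, v l^2) + v i^2)
              - ((∑ l ∈ T, u l * v l) + u i * v i)^2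
            + (∑ l ∈ R, (((∑ l' ∈ T, u l'^2) + u i^2) * v l^2
                + ((∑ l' ∈ T, v l'^2) + v i^2) * u l^2
                - 2*((∑ l' ∈ T, u l' * v l') + u i * v i) * (u l * v l)))
            + (∑ l ∈ R, ∑ l' ∈ R, (u l^2 * v l'^2 - (u l * v l) * (u l' * v l'))) := by
      intro R hR
      simp only [dS]
      rw [Finset.sum_union (hdisjR R hR), Finset.sum_union (hdisjR R hR),
        Finset.sum_union (hdisjR R hR), hp1, hr1, hq1]
      have e1 : ∑ l ∈ R, (((∑ l' ∈ T, u l'^2) + u i^2) * v l^2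
          + ((∑ l' ∈ T, v l'^2) + v i^2) * u l^2
          - 2*((∑ l' ∈ T, u l' * v l') + u i * v i) * (u l * v l))
          = ((∑ l' ∈ T, u l'^2) + u i^2) * (∑ l ∈ R, v l^2)
            + ((∑ l' ∈ T, v l'^2) + v i^2) * (∑ l ∈ R, u l^2)
            - 2*((∑ l' ∈ T, u l' * v l') + u i * v i) * (∑ l ∈ R, (u l * v l)) := by
        rw [Finset.sum_sub_distrib, Finset.sum_add_distrib, ← Finset.mul_sum,
          ← Finset.mul_sum, ← Finset.mul_sum]
      have e2 : ∑ l ∈ R, ∑ l' ∈ R, (u l^2 * v l'^2 - (u l * v l) * (u l' * v l'))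
          = (∑ l ∈ R, u l^2) * (∑ l ∈ R, v l^2) - (∑ l ∈ R, (u l * v l))^2 := by
        have e3 : ∀ l ∈ R, ∑ l' ∈ R, (u l^2 * v l'^2 - (u l * v l) * (u l' * v l'))
            = u l^2 * (∑ l' ∈ R, v l'^2) - (u l * v l) * (∑ l' ∈ R, (u l' * v l')) := by
          intro l _
          rw [Finset.sum_sub_distrib, ← Finset.mul_sum, ← Finset.mul_sum]
        rw [Finset.sum_congr rfl e3, Finset.sum_sub_distrib, ← Finset.sum_mul,
          ← Finset.sum_mul]
        ring
      rw [e1, e2]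
      ring
    rw [CT, h, Finset.sum_congr rfl hsplit, Finset.sum_add_distrib, Finset.sum_add_distrib,
      Finset.sum_const, Lsum2, Lsum3 _ _ _ (by intro l; ring),
      Finset.card_powersetCard, hVcard, hVcast, nsmul_eq_mul]
    have hE : ∑ l ∈ (Finset.univ \ T).erase i, (((∑ l' ∈ T, u l'^2) + u i^2) * v l^2
        + ((∑ l' ∈ T, v l'^2) + v i^2) * u l^2
        - 2*((∑ l' ∈ T, u l' * v l') + u i * v i) * (u l * v l))
        = ((∑ l ∈ T, u l^2) + u i^2) * (1 - ((∑ l ∈ T, v l^2) + v i^2))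
          + ((∑ l ∈ T, v l^2) + v i^2) * (1 - ((∑ l ∈ T, u l^2) + u i^2))
          + 2*((∑ l ∈ T, u l * v l) + u i * v i)^2 := by
      rw [Finset.sum_sub_distrib, Finset.sum_add_distrib, ← Finset.mul_sum, ← Finset.mul_sum,
        ← Finset.mul_sum, hVu, hVv, hVuv]
      ring
    have hF : ∑ l ∈ (Finset.univ \ T).erase i, ∑ l' ∈ (Finset.univ \ T).erase i,
        (u l^2 * v l'^2 - (u l * v l) * (u l' * v l'))
        = (1 - ((∑ l ∈ T, u l^2) + u i^2)) * (1 - ((∑ l ∈ T, v l^2) + v i^2))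
          - ((∑ l ∈ T, u l * v l) + u i * v i)^2 := by
      have e3 : ∀ l ∈ (Finset.univ \ T).erase i, ∑ l' ∈ (Finset.univ \ T).erase i,
          (u l^2 * v l'^2 - (u l * v l) * (u l' * v l'))
          = u l^2 * (1 - ((∑ l'' ∈ T, v l''^2) + v i^2))
            - (u l * v l) * (- (∑ l'' ∈ T, u l'' * v l'') - u i * v i) := by
        intro l _
        rw [Finset.sum_sub_distrib, ← Finset.mul_sum, ← Finset.mul_sum, hVv, hVuv]
        ring
      rw [Finset.sum_congr rfl e3, Finset.sum_sub_distrib, ← Finset.sum_mul, ← Finset.sum_mul,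
        hVu, hVuv]
      ring
    rw [hE, hF]


def InvP {m : ℕ} (k : ℕ) (u v : Fin m → ℝ) (μ : ℝ) (T : Finset (Fin m)) : Prop :=
  0 ≤ ((FF k T).card : ℝ) * μ^2 - BT k u v T * μ + CT k u v T
    ∧ 2 * ((FF k T).card : ℝ) * μ ≤ BT k u v T

set_option maxHeartbeats 2000000 in
lemma step {m : ℕ} (k : ℕ) (u v : Fin m → ℝ) (μ : ℝ)
    (hu : ∑ l, u l^2 = 1) (hv : ∑ l, v l^2 = 1) (huv : ∑ l, u l * v l = 0)
    (hkm : k < m) (T : Finset (Fin m)) (hTk : T.card < k) (hInv : InvP k u v μ T) :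
    ∃ i, i ∉ T ∧ InvP k u v μ (insert i T) := by
  have hTm : T.card < m := by omega
  set Mn : ℕ := m - T.card with hMn
  set qn : ℕ := k - T.card - 1 with hqn
  have hMn2 : 2 ≤ Mn := by omega
  have hqMn : qn ≤ Mn - 2 := by omega
  set Mr : ℝ := (Mn : ℝ) with hMr
  have hMr2 : (2:ℝ) ≤ Mr := by rw [hMr]; exact_mod_cast hMn2
  have hqMr : (qn:ℝ) ≤ Mr - 2 := by
    have : ((qn:ℕ):ℝ) ≤ ((Mn - 2 : ℕ):ℝ) := by exact_mod_cast hqMn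
    rw [Nat.cast_sub hMn2] at this
    push_cast at this ⊢
    linarith
  set α : ℝ := (qn:ℝ)/(Mr-1) with hα
  set β : ℝ := (qn:ℝ)*((qn:ℝ)-1)/((Mr-1)*(Mr-2)) with hβ
  set p0 : ℝ := ∑ l ∈ T, u l^2 with hp0
  set r0 : ℝ := ∑ l ∈ T, v l^2 with hr0
  set q0 : ℝ := ∑ l ∈ T, u l * v l with hq0
  set τ : ℝ := p0 + r0 with hτ
  set d0 : ℝ := p0*r0 - q0^2 with hd0
  set n1 : ℝ := (((Mn - 1).choose qn : ℕ) : ℝ) with hn1def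
  have hα1 : α < 1 := by
    rw [hα, div_lt_one (by linarith)]
    linarith
  have h1α : (0:ℝ) < 1 - α := by linarith
  have hdisc0 : 0 ≤ τ^2 - 4*d0 := by
    rw [hτ, hd0]; nlinarith [sq_nonneg (p0-r0), sq_nonneg q0]
  set s : ℝ := ((α^2-β)*(2-τ) + (1-2*α+β)*Real.sqrt (τ^2-4*d0))/(1-α) with hs
  have hs_eq : s * (1-α) = (α^2-β)*(2-τ) + (1-2*α+β)*Real.sqrt (τ^2-4*d0) :=
    div_mul_cancel₀ _ (ne_of_gt h1α)
  have hAG : 0 ≤ α^2 - β ∧ 0 ≤ 1 - 2*α + β := by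
    rcases Nat.eq_zero_or_pos qn with hq0' | hq1'
    · rw [hα, hβ, hq0']
      norm_num
    · have hMr3 : (3:ℝ) ≤ Mr := by
        have : 1 ≤ (qn:ℝ) := by exact_mod_cast hq1'
        linarith
      have hd1 : (0:ℝ) < Mr - 1 := by linarith
      have hd2 : (0:ℝ) < Mr - 2 := by linarith
      have hqr0 : (0:ℝ) ≤ (qn:ℝ) := Nat.cast_nonneg _
      constructor
      · have he : α^2 - β = (qn:ℝ)*((Mr-1) - (qn:ℝ))/((Mr-1)^2*(Mr-2)) := by
          rw [hα, hβ]; field_simp; ring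
        rw [he]
        apply div_nonneg (mul_nonneg hqr0 (by linarith)) (by positivity)
      · have he : 1 - 2*α + β = ((Mr-1) - (qn:ℝ))*((Mr-2) - (qn:ℝ))/((Mr-1)*(Mr-2)) := by
          rw [hα, hβ]; field_simp; ring
        rw [he]
        apply div_nonneg (mul_nonneg (by linarith) (by linarith)) (by positivity)
  -- the three formulas, rephrased
  have hkey : ∀ i ∈ Finset.univ \ T,
      ((FF k (insert i T)).card : ℝ) = n1
      ∧ BT k u v (insert i T) = n1 * ((1-α)*(τ + (u i^2 + v i^2)) + 2*α)
      ∧ CT k u v (insert i T)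
        = n1 * (d0 + (1-α)*(r0*u i^2 - 2*q0*(u i * v i) + p0*v i^2) + α*(τ-2*d0)
            + (α-β)*((u i^2 + v i^2) - (r0*u i^2 - 2*q0*(u i * v i) + p0*v i^2))
            + β*(1-τ+d0)) := by
    intro i hi
    obtain ⟨hN', hB', hC'⟩ := childFormulas k u v hu hv huv hkm T hTk i hi
    refine ⟨hN', ?_, ?_⟩
    · rw [hB', ← hp0, ← hr0, ← hqn, ← hMn, ← hMr, ← hα, ← hn1def, ← hτ]
      ring
    · rw [hC', ← hp0, ← hr0, ← hq0, ← hqn, ← hMn, ← hMr, ← hn1def]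
      rw [show Mr - 1 - 1 = Mr - 2 by ring, ← hα, ← hβ]
      rw [hτ, hd0]
      ring
  -- apply stepCore
  have hUcard : (Finset.univ \ T).card = Mn := by
    rw [Finset.card_sdiff_of_subset (Finset.subset_univ T), Finset.card_univ, Fintype.card_fin]
  have hUne : (Finset.univ \ T).Nonempty := by
    rw [← Finset.card_pos, hUcard]; omega
  have hn1pos : (0:ℝ) < n1 := by
    rw [hn1def]
    exact_mod_cast Nat.choose_pos (by omega : qn ≤ Mn - 1)
  have hNval : ((FF k T).card : ℝ) = ((Mn.choose (k - T.card) : ℕ) : ℝ) := by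
    have h := reindexFF k T (le_of_lt hTk) (fun _ => (1:ℝ))
    simp only [Finset.sum_const, nsmul_eq_mul, mul_one] at h
    rw [h, Finset.card_powersetCard, hUcard]
  have hNpos : (0:ℝ) < ((FF k T).card : ℝ) := by
    rw [hNval]
    exact_mod_cast Nat.choose_pos (by omega : k - T.card ≤ Mn)
  have hrrpos : (0:ℝ) < ((k - T.card : ℕ) : ℝ) := by
    have : 0 < k - T.card := by omega
    exact_mod_cast this
  have hDb : ∀ i ∈ Finset.univ \ T,
      ((n1*(1-α)) * (u i^2 + v i^2) - n1*s)^2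
        ≤ (BT k u v (insert i T))^2 - 4*n1*(CT k u v (insert i T)) := by
    intro i hi
    obtain ⟨_, hB', hC'⟩ := hkey i hi
    have hQ : (τ*(u i^2 + v i^2) - 2*(r0*u i^2 - 2*q0*(u i * v i) + p0*v i^2))^2
        ≤ (τ^2-4*d0)*(u i^2 + v i^2)^2 := by
      rw [hτ, hd0]
      nlinarith [sq_nonneg ((p0-r0)*(2*(u i*v i)) - (2*q0)*(u i^2 - v i^2)),
        sq_nonneg (u i * v i)]
    have hcore := coreDisc α β τ d0 (r0*u i^2 - 2*q0*(u i * v i) + p0*v i^2)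
      (u i^2 + v i^2) s hα1 hAG.1 hAG.2 hdisc0 (by positivity) hQ hs_eq
    calc ((n1*(1-α)) * (u i^2 + v i^2) - n1*s)^2
        = n1^2 * ((1-α)*(u i^2 + v i^2) - s)^2 := by ring
      _ ≤ n1^2 * (((1-α)*(τ+(u i^2 + v i^2)) + 2*α)^2
            - 4*(d0 + (1-α)*(r0*u i^2 - 2*q0*(u i * v i) + p0*v i^2) + α*(τ-2*d0)
              + (α-β)*((u i^2 + v i^2) - (r0*u i^2 - 2*q0*(u i * v i) + p0*v i^2))
              + β*(1-τ+d0))) := by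
          exact mul_le_mul_of_nonneg_left hcore (sq_nonneg n1)
      _ = (BT k u v (insert i T))^2 - 4*n1*(CT k u v (insert i T)) := by
          rw [hB', hC']; ring
  have hpair : ∀ i ∈ Finset.univ \ T, ∀ i' ∈ Finset.univ \ T,
      BT k u v (insert i T) - BT k u v (insert i' T)
        = (n1*(1-α)) * ((u i^2 + v i^2) - (u i'^2 + v i'^2)) := by
    intro i hi i' hi'
    rw [(hkey i hi).2.1, (hkey i' hi').2.1]
    ring
  have hsN : ((Finset.univ \ T).card : ℝ) * n1
      = ((k - T.card : ℕ) : ℝ) * ((FF k T).card : ℝ) := by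
    have h := childSum k T (le_of_lt hTk) (fun _ => (1:ℝ))
    simp only [Finset.sum_const, nsmul_eq_mul, mul_one] at h
    calc ((Finset.univ \ T).card : ℝ) * n1
        = ∑ i ∈ Finset.univ \ T, n1 := by rw [Finset.sum_const, nsmul_eq_mul]
      _ = ∑ i ∈ Finset.univ \ T, ((FF k (insert i T)).card : ℝ) := by
          exact Finset.sum_congr rfl fun i hi => ((hkey i hi).1).symm
      _ = ((k - T.card : ℕ) : ℝ) * ((FF k T).card : ℝ) := h
  have hsB : ∑ i ∈ Finset.univ \ T, BT k u v (insert i T)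
      = ((k - T.card : ℕ) : ℝ) * BT k u v T := childSum k T (le_of_lt hTk) (tS u v)
  have hsC : ∑ i ∈ Finset.univ \ T, CT k u v (insert i T)
      = ((k - T.card : ℕ) : ℝ) * CT k u v T := childSum k T (le_of_lt hTk) (dS u v)
  obtain ⟨i₀, hi₀, hI1, hI2⟩ := stepCore (Finset.univ \ T) hUne n1 ((FF k T).card : ℝ)
    (BT k u v T) (CT k u v T) ((k - T.card : ℕ) : ℝ) μ (n1*(1-α)) (n1*s)
    (fun i => BT k u v (insert i T)) (fun i => CT k u v (insert i T))
    (fun i => u i^2 + v i^2)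
    hn1pos hNpos hrrpos hDb hpair hsN hsB hsC hInv.1 hInv.2
  refine ⟨i₀, (Finset.mem_sdiff.mp hi₀).2, ?_, ?_⟩
  · rw [(hkey i₀ hi₀).1]; exact hI1
  · rw [(hkey i₀ hi₀).1]; exact hI2


lemma FF_self {m : ℕ} (k : ℕ) (T : Finset (Fin m)) (hT : T.card = k) : FF k T = {T} := by
  ext S
  rw [mem_FF, Finset.mem_singleton]
  constructor
  · rintro ⟨hc, hTS⟩
    exact (Finset.eq_of_subset_of_card_le hTS (by omega)).symm
  · rintro rfl
    exact ⟨hT, subset_rfl⟩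

lemma inductLemma {m : ℕ} (k : ℕ) (u v : Fin m → ℝ) (μ : ℝ)
    (hu : ∑ l, u l^2 = 1) (hv : ∑ l, v l^2 = 1) (huv : ∑ l, u l * v l = 0)
    (hkm : k < m) :
    ∀ (c : ℕ) (T : Finset (Fin m)), T.card + c = k → InvP k u v μ T →
      ∃ S : Finset (Fin m), S.card = k
        ∧ 0 ≤ μ^2 - tS u v S * μ + dS u v S ∧ 2*μ ≤ tS u v S := by
  intro c
  induction c with
  | zero =>
    intro T hT hInv
    obtain ⟨h1, h2⟩ := hInv
    rw [FF_self k T (by omega)] at h1 h2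
    simp only [Finset.card_singleton, Nat.cast_one, BT, CT, FF_self k T (by omega),
      Finset.sum_singleton] at h1 h2
    refine ⟨T, by omega, ?_, ?_⟩
    · calc (0:ℝ) ≤ 1 * μ^2 - tS u v T * μ + dS u v T := h1
        _ = μ^2 - tS u v T * μ + dS u v T := by ring
    · linarith
  | succ n ih =>
    intro T hT hInv
    obtain ⟨i, hiT, hInv'⟩ := step k u v μ hu hv huv hkm T (by omega) hInv
    exact ih (insert i T) (by rw [Finset.card_insert_of_notMem hiT]; omega) hInv'

lemma topInv {m : ℕ} (k : ℕ) (u v : Fin m → ℝ)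
    (hu : ∑ l, u l^2 = 1) (hv : ∑ l, v l^2 = 1) (huv : ∑ l, u l * v l = 0)
    (hk : 2 ≤ k) (hkm : k < m) :
    InvP k u v (((k:ℝ) - Real.sqrt ((k:ℝ)*((m:ℝ)-k)/((m:ℝ)-1)))/m) ∅ := by
  have hm1 : (1:ℝ) ≤ (m:ℝ) - 1 := by
    have : (3:ℕ) ≤ m := by omega
    have : (3:ℝ) ≤ (m:ℝ) := by exact_mod_cast this
    linarith
  have hm0 : (0:ℝ) < m := by
    have : (0:ℕ) < m := by omega
    exact_mod_cast this
  have hFFe : FF k (∅ : Finset (Fin m)) = (Finset.univ : Finset (Fin m)).powersetCard k := by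
    rw [FF, Finset.filter_true_of_mem (fun S _ => Finset.empty_subset S)]
  have hcard : ((FF k (∅ : Finset (Fin m))).card : ℝ) = (m.choose k : ℝ) := by
    rw [hFFe, Finset.card_powersetCard, Finset.card_univ, Fintype.card_fin]
  have hBval : BT k u v ∅ = (k:ℝ)/(m:ℝ) * (m.choose k : ℝ) * 2 := by
    rw [BT, hFFe]
    have : ∀ S ∈ (Finset.univ : Finset (Fin m)).powersetCard k,
        tS u v S = ∑ l ∈ S, (u l^2 + v l^2) := fun S _ => rfl
    rw [Finset.sum_congr rfl this, Lsum2, Finset.card_univ, Fintype.card_fin]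
    rw [Finset.sum_add_distrib, hu, hv]
    norm_num
  have hCval : CT k u v ∅ = (k:ℝ)*((k:ℝ)-1)/((m:ℝ)*((m:ℝ)-1)) * (m.choose k : ℝ) := by
    rw [CT, hFFe]
    have hds : ∀ S ∈ (Finset.univ : Finset (Fin m)).powersetCard k,
        dS u v S = ∑ l ∈ S, ∑ l' ∈ S, (u l^2 * v l'^2 - (u l * v l) * (u l' * v l')) := by
      intro S _
      rw [dS]
      have e3 : ∀ l ∈ S, ∑ l' ∈ S, (u l^2 * v l'^2 - (u l * v l) * (u l' * v l'))
          = u l^2 * (∑ l' ∈ S, v l'^2) - (u l * v l) * (∑ l' ∈ S, (u l' * v l')) := by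
        intro l _
        rw [Finset.sum_sub_distrib, ← Finset.mul_sum, ← Finset.mul_sum]
      rw [Finset.sum_congr rfl e3, Finset.sum_sub_distrib, ← Finset.sum_mul, ← Finset.sum_mul]
      ring
    rw [Finset.sum_congr rfl hds, Lsum3 _ _ _ (by intro l; ring), Finset.card_univ,
      Fintype.card_fin]
    have hinner : ∀ l ∈ (Finset.univ : Finset (Fin m)),
        ∑ l' ∈ Finset.univ, (u l^2 * v l'^2 - (u l * v l) * (u l' * v l'))
          = u l^2 * 1 - (u l * v l) * 0 := by
      intro l _
      rw [Finset.sum_sub_distrib, ← Finset.mul_sum, ← Finset.mul_sum, hv, huv]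
    rw [Finset.sum_congr rfl hinner]
    simp only [mul_one, mul_zero, sub_zero, hu]
    try ring
  have hWnn : (0:ℝ) ≤ (k:ℝ)*((m:ℝ)-k)/((m:ℝ)-1) := by
    have hkm' : (k:ℝ) ≤ (m:ℝ) := by exact_mod_cast le_of_lt hkm
    have : (0:ℝ) ≤ (k:ℝ) := by positivity
    apply div_nonneg (mul_nonneg this (by linarith)) (by linarith)
  have hW2 : (Real.sqrt ((k:ℝ)*((m:ℝ)-k)/((m:ℝ)-1)))^2 = (k:ℝ)*((m:ℝ)-k)/((m:ℝ)-1) :=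
    Real.sq_sqrt hWnn
  set W : ℝ := Real.sqrt ((k:ℝ)*((m:ℝ)-k)/((m:ℝ)-1)) with hW
  set μ : ℝ := ((k:ℝ) - W)/m with hμ
  have hroot : μ^2 - 2*(k:ℝ)/(m:ℝ)*μ + (k:ℝ)*((k:ℝ)-1)/((m:ℝ)*((m:ℝ)-1)) = 0 := by
    rw [hμ]
    have hm0' : (m:ℝ) ≠ 0 := ne_of_gt hm0
    have hm1' : (m:ℝ) - 1 ≠ 0 := by linarith
    have hm1'' : (-1 + (m:ℝ)) ≠ 0 := by
      intro h; apply hm1'; linarith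
    have hW2' : W^2 * ((m:ℝ)-1) = (k:ℝ)*((m:ℝ)-(k:ℝ)) := by
      rw [hW2]; field_simp
    field_simp [hm0', hm1'']
    linear_combination hW2'
  constructor
  · rw [hcard, hBval, hCval]
    have : (m.choose k : ℝ) * μ^2 - (k:ℝ)/(m:ℝ) * (m.choose k : ℝ) * 2 * μ
        + (k:ℝ)*((k:ℝ)-1)/((m:ℝ)*((m:ℝ)-1)) * (m.choose k : ℝ)
        = (m.choose k : ℝ) * (μ^2 - 2*(k:ℝ)/(m:ℝ)*μ + (k:ℝ)*((k:ℝ)-1)/((m:ℝ)*((m:ℝ)-1))) := by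
      ring
    rw [this, hroot, mul_zero]
  · rw [hcard, hBval]
    have hW0 : 0 ≤ W := Real.sqrt_nonneg _
    have hμk : μ ≤ (k:ℝ)/(m:ℝ) := by
      rw [hμ, div_le_div_iff₀ hm0 hm0]
      nlinarith
    have hchoose : (0:ℝ) ≤ (m.choose k : ℝ) := by positivity
    calc 2 * (m.choose k : ℝ) * μ ≤ 2 * (m.choose k : ℝ) * ((k:ℝ)/(m:ℝ)) := by nlinarith
      _ = (k:ℝ)/(m:ℝ) * (m.choose k : ℝ) * 2 := by ring

theorem mainComb {m : ℕ} (k : ℕ) (u v : Fin m → ℝ)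
    (hu : ∑ l, u l^2 = 1) (hv : ∑ l, v l^2 = 1) (huv : ∑ l, u l * v l = 0)
    (hk : 2 ≤ k) (hkm : k < m) :
    ∃ S : Finset (Fin m), S.card = k
      ∧ 0 ≤ (((k:ℝ) - Real.sqrt ((k:ℝ)*((m:ℝ)-k)/((m:ℝ)-1)))/m)^2
          - tS u v S * (((k:ℝ) - Real.sqrt ((k:ℝ)*((m:ℝ)-k)/((m:ℝ)-1)))/m) + dS u v S
      ∧ 2*(((k:ℝ) - Real.sqrt ((k:ℝ)*((m:ℝ)-k)/((m:ℝ)-1)))/m) ≤ tS u v S :=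
  inductLemma k u v _ hu hv huv hkm k ∅ (by simp) (topInv k u v hu hv huv hk hkm)


lemma qfBound (P R Q μ x0 x1 : ℝ) (h1 : 0 ≤ μ^2 - (P+R)*μ + (P*R - Q^2))
    (h2 : 2*μ ≤ P + R) (hx : x0^2 + x1^2 = 1) :
    μ ≤ P*x0^2 + 2*Q*(x0*x1) + R*x1^2 := by
  have hprod : 0 ≤ (P-μ)*(R-μ) - Q^2 := by nlinarith [h1]
  have ha : 0 ≤ P - μ := by nlinarith [hprod, sq_nonneg Q]
  have hb : 0 ≤ R - μ := by nlinarith [hprod, sq_nonneg Q]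
  rcases eq_or_lt_of_le ha with heq | hlt
  · have hQ : Q = 0 := by nlinarith [hprod, sq_nonneg Q]
    have hPμ : P = μ := by linarith
    rw [hQ, hPμ]
    nlinarith [mul_nonneg hb (sq_nonneg x1),
      (by linear_combination μ * hx : μ*x0^2 + μ*x1^2 = μ)]
  · have key : (P-μ)*(P*x0^2 + 2*Q*(x0*x1) + R*x1^2 - μ)
        = ((P-μ)*x0 + Q*x1)^2 + ((P-μ)*(R-μ) - Q^2)*x1^2 := by
      linear_combination ((P-μ)*μ) * hx
    nlinarith [key, sq_nonneg ((P-μ)*x0 + Q*x1), mul_nonneg hprod (sq_nonneg x1), hlt]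

open Matrix in
theorem main_aux {m k : ℕ} (hk : 2 ≤ k) (hkm : k < m)
    (A : Matrix (Fin 2) (Fin m) ℝ) (hA : A * Aᵀ = 1) :
    ∃ S : Finset (Fin m), S.card = k ∧
      (sInf {r : ℝ | ∃ x : EuclideanSpace ℝ (Fin 2), ‖x‖ = 1 ∧
        r = ‖(WithLp.equiv 2 (S → ℝ)).symm
          ((A.submatrix id (fun j : S => (j : Fin m)))ᵀ.mulVec
            ((WithLp.equiv 2 (Fin 2 → ℝ)) x))‖}) ^ 2 ≥
        ((k : ℝ) - Real.sqrt ((k : ℝ) * ((m : ℝ) - k) / ((m : ℝ) - 1))) / m := by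
  have hij : ∀ i j, (A * Aᵀ) i j = (1 : Matrix (Fin 2) (Fin 2) ℝ) i j := fun i j => by rw [hA]
  have hmul : ∀ i j, (A * Aᵀ) i j = ∑ l, A i l * A j l := by
    intro i j
    rw [Matrix.mul_apply]
    exact Finset.sum_congr rfl fun l _ => by rw [Matrix.transpose_apply]
  have hu : ∑ l, (A 0 l)^2 = 1 := by
    have h := (hmul 0 0).symm.trans (hij 0 0)
    rw [Matrix.one_apply_eq] at h
    calc ∑ l, (A 0 l)^2 = ∑ l, A 0 l * A 0 l := by
          exact Finset.sum_congr rfl fun l _ => sq (A 0 l) ▸ by ring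
      _ = 1 := h
  have hv : ∑ l, (A 1 l)^2 = 1 := by
    have h := (hmul 1 1).symm.trans (hij 1 1)
    rw [Matrix.one_apply_eq] at h
    calc ∑ l, (A 1 l)^2 = ∑ l, A 1 l * A 1 l := by
          exact Finset.sum_congr rfl fun l _ => by ring
      _ = 1 := h
  have huv : ∑ l, A 0 l * A 1 l = 0 := by
    have h := (hmul 0 1).symm.trans (hij 0 1)
    rw [Matrix.one_apply_ne (by decide)] at h
    exact h
  set W : ℝ := Real.sqrt ((k:ℝ)*((m:ℝ)-k)/((m:ℝ)-1)) with hW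
  set μ : ℝ := ((k:ℝ) - W)/m with hμ
  have hm0 : (0:ℝ) < m := by
    have : (0:ℕ) < m := by omega
    exact_mod_cast this
  have hμ0 : 0 ≤ μ := by
    have hk0 : (0:ℝ) ≤ k := by positivity
    have hWk : W ≤ (k:ℝ) := by
      rw [hW]
      have h1 : (k:ℝ)*((m:ℝ)-k)/((m:ℝ)-1) ≤ (k:ℝ)^2 := by
        have hm1 : (1:ℝ) ≤ (m:ℝ) - 1 := by
          have : (2:ℕ) ≤ m := by omega
          have : (2:ℝ) ≤ (m:ℝ) := by exact_mod_cast this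
          linarith
        rw [div_le_iff₀ (by linarith)]
        have hk1 : (1:ℝ) ≤ (k:ℝ) := by
          have : (1:ℕ) ≤ k := by omega
          exact_mod_cast this
        have hkm' : (k:ℝ) ≤ (m:ℝ) := by exact_mod_cast le_of_lt hkm
        nlinarith [mul_nonneg (mul_nonneg (by linarith : (0:ℝ) ≤ (k:ℝ)-1) hk0)
          (le_of_lt hm0)]
      calc Real.sqrt ((k:ℝ)*((m:ℝ)-k)/((m:ℝ)-1)) ≤ Real.sqrt ((k:ℝ)^2) :=
            Real.sqrt_le_sqrt h1
        _ = k := Real.sqrt_sq hk0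
    rw [hμ]
    apply div_nonneg (by linarith) (le_of_lt hm0)
  obtain ⟨S, hScard, hleaf1, hleaf2⟩ :=
    mainComb k (fun l => A 0 l) (fun l => A 1 l) hu hv huv hk hkm
  rw [← hW, ← hμ] at hleaf1 hleaf2
  refine ⟨S, hScard, ?_⟩
  -- lower bound for each element of the set
  have hlow : ∀ r ∈ {r : ℝ | ∃ x : EuclideanSpace ℝ (Fin 2), ‖x‖ = 1 ∧
      r = ‖(WithLp.equiv 2 (S → ℝ)).symm
        ((A.submatrix id (fun j : S => (j : Fin m)))ᵀ.mulVec
          ((WithLp.equiv 2 (Fin 2 → ℝ)) x))‖}, Real.sqrt μ ≤ r := by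
    rintro r ⟨x, hx1, rfl⟩
    have hxsum : (x 0)^2 + (x 1)^2 = 1 := by
      have h := EuclideanSpace.norm_eq x
      rw [hx1] at h
      have h2 : Real.sqrt (∑ i, ‖x i‖^2) = 1 := h.symm
      have h3 : (∑ i : Fin 2, ‖x i‖^2) = 1 := by
        have hnn : (0:ℝ) ≤ ∑ i : Fin 2, ‖x i‖^2 := by positivity
        rw [← Real.sq_sqrt hnn, h2]
        norm_num
      rw [Fin.sum_univ_two] at h3
      simpa [Real.norm_eq_abs, sq_abs] using h3
    have hentry : ∀ j : S, ((A.submatrix id (fun j : S => (j : Fin m)))ᵀ.mulVec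
        ((WithLp.equiv 2 (Fin 2 → ℝ)) x)) j
        = A 0 (j : Fin m) * x 0 + A 1 (j : Fin m) * x 1 := by
      intro j
      rw [Matrix.mulVec, dotProduct]
      rw [Fin.sum_univ_two]
      rfl
    rw [EuclideanSpace.norm_eq]
    have hsum : ∑ j : S, ‖((WithLp.equiv 2 (S → ℝ)).symm
        ((A.submatrix id (fun j : S => (j : Fin m)))ᵀ.mulVec
          ((WithLp.equiv 2 (Fin 2 → ℝ)) x))) j‖^2
        = ∑ j ∈ S, (A 0 j * x 0 + A 1 j * x 1)^2 := by
      rw [← Finset.sum_coe_sort S (fun j => (A 0 j * x 0 + A 1 j * x 1)^2)]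
      refine Finset.sum_congr rfl fun j _ => ?_
      rw [Real.norm_eq_abs, sq_abs]
      congr 1
      exact hentry j
    rw [hsum]
    apply Real.sqrt_le_sqrt
    -- μ ≤ quadratic form
    have hqf : μ ≤ ∑ j ∈ S, (A 0 j * x 0 + A 1 j * x 1)^2 := by
      have hexp : ∑ j ∈ S, (A 0 j * x 0 + A 1 j * x 1)^2
          = (∑ j ∈ S, (A 0 j)^2) * (x 0)^2
            + 2*(∑ j ∈ S, A 0 j * A 1 j)*((x 0)*(x 1))
            + (∑ j ∈ S, (A 1 j)^2) * (x 1)^2 := by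
        have hper : ∀ j ∈ S, (A 0 j * x 0 + A 1 j * x 1)^2
            = (A 0 j)^2*((x 0)^2) + (A 0 j * A 1 j)*(2*(x 0*x 1)) + (A 1 j)^2*((x 1)^2) :=
          fun j _ => by ring
        rw [Finset.sum_congr rfl hper, Finset.sum_add_distrib, Finset.sum_add_distrib,
          ← Finset.sum_mul, ← Finset.sum_mul, ← Finset.sum_mul]
        ring
      rw [hexp]
      apply qfBound _ _ _ _ _ _ ?_ ?_ hxsum
      · have : tS (fun l => A 0 l) (fun l => A 1 l) S
            = (∑ j ∈ S, (A 0 j)^2) + (∑ j ∈ S, (A 1 j)^2) := by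
          rw [tS, Finset.sum_add_distrib]
        rw [← this]
        have hd : dS (fun l => A 0 l) (fun l => A 1 l) S
            = (∑ j ∈ S, (A 0 j)^2) * (∑ j ∈ S, (A 1 j)^2)
              - (∑ j ∈ S, A 0 j * A 1 j)^2 := rfl
        calc (0:ℝ) ≤ μ^2 - tS (fun l => A 0 l) (fun l => A 1 l) S * μ
              + dS (fun l => A 0 l) (fun l => A 1 l) S := hleaf1
          _ = μ^2 - tS (fun l => A 0 l) (fun l => A 1 l) S * μ
              + ((∑ j ∈ S, (A 0 j)^2) * (∑ j ∈ S, (A 1 j)^2)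
                - (∑ j ∈ S, A 0 j * A 1 j)^2) := by rw [hd]
      · have : tS (fun l => A 0 l) (fun l => A 1 l) S
            = (∑ j ∈ S, (A 0 j)^2) + (∑ j ∈ S, (A 1 j)^2) := by
          rw [tS, Finset.sum_add_distrib]
        rw [← this]
        exact hleaf2
    exact hqf
  -- nonempty
  have hne : {r : ℝ | ∃ x : EuclideanSpace ℝ (Fin 2), ‖x‖ = 1 ∧
      r = ‖(WithLp.equiv 2 (S → ℝ)).symm
        ((A.submatrix id (fun j : S => (j : Fin m)))ᵀ.mulVec
          ((WithLp.equiv 2 (Fin 2 → ℝ)) x))‖}.Nonempty := by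
    refine ⟨_, ⟨EuclideanSpace.single 0 1, ?_, rfl⟩⟩
    rw [EuclideanSpace.norm_single]
    norm_num
  have hInf : Real.sqrt μ ≤ sInf {r : ℝ | ∃ x : EuclideanSpace ℝ (Fin 2), ‖x‖ = 1 ∧
      r = ‖(WithLp.equiv 2 (S → ℝ)).symm
        ((A.submatrix id (fun j : S => (j : Fin m)))ᵀ.mulVec
          ((WithLp.equiv 2 (Fin 2 → ℝ)) x))‖} := le_csInf hne hlow
  have hfin : μ ≤ (sInf {r : ℝ | ∃ x : EuclideanSpace ℝ (Fin 2), ‖x‖ = 1 ∧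
      r = ‖(WithLp.equiv 2 (S → ℝ)).symm
        ((A.submatrix id (fun j : S => (j : Fin m)))ᵀ.mulVec
          ((WithLp.equiv 2 (Fin 2 → ℝ)) x))‖})^2 := by
    calc μ = (Real.sqrt μ)^2 := (Real.sq_sqrt hμ0).symm
      _ ≤ _ := by
        apply pow_le_pow_left₀ (Real.sqrt_nonneg μ) hInf
  exact hfin



/-- If `A ∈ ℝ^{2×m}` has orthonormal rows (`AAᵀ = I₂`) and `m > k ≥ 2`, then there exists
`S₀ ⊆ [m]` of size `k` with `σ_min(A_{S₀})² ≥ (k - √(k(m-k)/(m-1)))/m`. -/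
theorem stmt_14 (m k : ℕ) (hk : 2 ≤ k) (hkm : k < m)
    (A : Matrix (Fin 2) (Fin m) ℝ) (hA : A * Aᵀ = 1) :
    ∃ S : Finset (Fin m), S.card = k ∧
      sigmaMin2 (A.submatrix id (fun j : S => (j : Fin m))) ^ 2 ≥
        ((k : ℝ) - Real.sqrt ((k : ℝ) * ((m : ℝ) - k) / ((m : ℝ) - 1))) / m := by
  obtain ⟨S, hcard, hineq⟩ := main_aux hk hkm A hA
  refine ⟨S, hcard, ?_⟩
  unfold sigmaMin2
  exact hineq
end

section
/- Let 3 ≤ k < m be integers and let f(x) = m(m-1)(m-2)x³ - 3k(m-1)(m-2)x² + 3k(k-1)(m-2)x - k(k-1)(k-2). Then f has three real roots, and its smallest root equals k/m + (2/m)·√(k(m-k)/(m-1))·cos((1/3)·arccos(((m-2k)/(m-2))·√((m-1)/(k(m-k)))) + 2π/3). -/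
set_option maxHeartbeats 1000000


open Polynomial

/-- For integers `3 ≤ k < m`, the cubic
`f(x) = m(m-1)(m-2)x³ - 3k(m-1)(m-2)x² + 3k(k-1)(m-2)x - k(k-1)(k-2)` has three real
roots (with multiplicity), and its smallest root is
`k/m + (2/m)√(k(m-k)/(m-1)) cos((1/3) arccos(((m-2k)/(m-2))√((m-1)/(k(m-k)))) + 2π/3)`. -/
theorem stmt_17 (m k : ℕ) (hk : 3 ≤ k) (hkm : k < m) :
    (C ((m : ℝ) * ((m : ℝ) - 1) * ((m : ℝ) - 2)) * X ^ 3 -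
        C (3 * (k : ℝ) * ((m : ℝ) - 1) * ((m : ℝ) - 2)) * X ^ 2 +
        C (3 * (k : ℝ) * ((k : ℝ) - 1) * ((m : ℝ) - 2)) * X -
        C ((k : ℝ) * ((k : ℝ) - 1) * ((k : ℝ) - 2))).roots.card = 3 ∧
    IsLeast {x : ℝ |
        (m : ℝ) * ((m : ℝ) - 1) * ((m : ℝ) - 2) * x ^ 3 -
          3 * k * ((m : ℝ) - 1) * ((m : ℝ) - 2) * x ^ 2 +
          3 * k * ((k : ℝ) - 1) * ((m : ℝ) - 2) * x -
          (k : ℝ) * ((k : ℝ) - 1) * ((k : ℝ) - 2) = 0}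
      ((k : ℝ) / m + (2 / m) * Real.sqrt ((k : ℝ) * ((m : ℝ) - k) / ((m : ℝ) - 1)) *
        Real.cos ((1 / 3) * Real.arccos ((((m : ℝ) - 2 * k) / ((m : ℝ) - 2)) *
            Real.sqrt (((m : ℝ) - 1) / ((k : ℝ) * ((m : ℝ) - k)))) + 2 * Real.pi / 3)) := by
  have hK3 : (3:ℝ) ≤ (k:ℝ) := by exact_mod_cast hk
  have hKM : (k:ℝ) + 1 ≤ (m:ℝ) := by exact_mod_cast hkm
  set M := (m:ℝ) with hMdef
  set K := (k:ℝ) with hKdef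
  have hMpos : 0 < M := by linarith
  have hM0 : M ≠ 0 := ne_of_gt hMpos
  have hM1 : M - 1 > 0 := by linarith
  have hM2 : M - 2 > 0 := by linarith
  have hK0 : K > 0 := by linarith
  have hMK : M - K > 0 := by linarith
  have hp0 : M * (M - 1) * (M - 2) ≠ 0 := by positivity
  set s := Real.sqrt (K * (M - K) / (M - 1)) with hsdef
  set w := Real.sqrt ((M - 1) / (K * (M - K))) with hwdef
  set c := (M - 2 * K) / (M - 2) * w with hcdef
  set θ := Real.arccos c with hθdef
  set t1 := Real.cos (1 / 3 * θ + 2 * Real.pi / 3) with ht1def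
  set ca := Real.cos (1 / 3 * θ) with hcadef
  set sa := Real.sin (1 / 3 * θ) with hsadef
  set r3 := Real.sqrt 3 with hr3def
  have hs2 : s ^ 2 * (M - 1) = K * (M - K) := by
    rw [hsdef, Real.sq_sqrt (by positivity)]; field_simp
  have hw2 : w ^ 2 * (K * (M - K)) = M - 1 := by
    rw [hwdef, Real.sq_sqrt (by positivity)]; field_simp
  have hsw : s * w = 1 := by
    rw [hsdef, hwdef, ← Real.sqrt_mul (by positivity)]
    rw [show K * (M - K) / (M - 1) * ((M - 1) / (K * (M - K))) = 1 by field_simp]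
    exact Real.sqrt_one
  have hr3 : r3 ^ 2 = 3 := Real.sq_sqrt (by norm_num)
  have hr30 : 0 ≤ r3 := Real.sqrt_nonneg _
  have hs0 : 0 ≤ s := Real.sqrt_nonneg _
  have hcsq : c ^ 2 ≤ 1 := by
    have key : (M - 2 * K) ^ 2 * (M - 1) ≤ (M - 2) ^ 2 * (K * (M - K)) := by
      have hnn : 0 ≤ M ^ 2 * ((K - 1) * (M - K - 1)) :=
        mul_nonneg (sq_nonneg M) (mul_nonneg (by linarith) (by linarith))
      have e : (M - 2) ^ 2 * (K * (M - K)) - (M - 2 * K) ^ 2 * (M - 1) =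
          M ^ 2 * ((K - 1) * (M - K - 1)) := by ring
      linarith [e, hnn]
    have hc2e : c ^ 2 * ((M - 2) ^ 2 * (K * (M - K))) = (M - 2 * K) ^ 2 * (M - 1) := by
      rw [hcdef, mul_pow, div_pow]
      field_simp
      linear_combination ((M - 2*K)^2) * hw2
    have hD : 0 < (M - 2) ^ 2 * (K * (M - K)) := by positivity
    have hle : c ^ 2 * ((M - 2) ^ 2 * (K * (M - K))) ≤ 1 * ((M - 2) ^ 2 * (K * (M - K))) := by
      rw [one_mul, hc2e]; exact key
    exact le_of_mul_le_mul_right hle hD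
  have hcle : -1 ≤ c ∧ c ≤ 1 := by
    have habs : |c| ≤ 1 := by
      have h2 : |c| ^ 2 ≤ 1 ^ 2 := by rw [sq_abs, one_pow]; exact hcsq
      exact abs_le_of_sq_le_sq' (by rw [sq_abs] at h2; simpa using h2) (by norm_num) |>.2
    exact abs_le.mp habs
  have hcosθ : Real.cos θ = c := Real.cos_arccos hcle.1 hcle.2
  have h3c : 4 * ca ^ 3 - 3 * ca = c := by
    have h := Real.cos_three_mul (1 / 3 * θ)
    rw [show 3 * (1 / 3 * θ) = θ by ring] at h
    rw [hcosθ] at h; rw [← hcadef] at h; linarith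
  have hsa2 : sa ^ 2 = 1 - ca ^ 2 := by rw [hsadef, hcadef]; exact Real.sin_sq _
  have ht1v : t1 = -ca / 2 - r3 / 2 * sa := by
    rw [ht1def, show 1 / 3 * θ + 2 * Real.pi / 3 = Real.pi - (Real.pi / 3 - 1 / 3 * θ) by ring,
      Real.cos_pi_sub, Real.cos_sub, Real.cos_pi_div_three, Real.sin_pi_div_three,
      ← hcadef, ← hsadef, hr3def]
    ring
  -- the three roots
  set R0 := K / M + 2 / M * s * ca with hR0
  set R1 := K / M + 2 / M * s * t1 with hR1
  set R2 := K / M + 2 / M * s * (-ca / 2 + r3 / 2 * sa) with hR2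
  have hsc : s * c * (M - 2) = M - 2 * K := by
    rw [hcdef]; field_simp; linear_combination (M - 2*K) * hsw
  have hMR0 : M * R0 = K + 2 * s * ca := by rw [hR0]; field_simp
  have hMR1 : M * R1 = K + 2 * s * (-ca / 2 - r3 / 2 * sa) := by
    rw [hR1, ht1v]; field_simp
  have hMR2 : M * R2 = K + 2 * s * (-ca / 2 + r3 / 2 * sa) := by
    rw [hR2]; field_simp
  have hA : M * (R0 + R1 + R2) = 3 * K := by
    have e : M * (R0 + R1 + R2) = M * R0 + M * R1 + M * R2 := by ring
    rw [e, hMR0, hMR1, hMR2]; ring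
  have hB : M * (M - 1) * (R0 * R1 + R0 * R2 + R1 * R2) = 3 * K * (K - 1) := by
    apply mul_left_cancel₀ hM0
    have e : M * (M * (M - 1) * (R0 * R1 + R0 * R2 + R1 * R2)) =
        (M - 1) * ((M * R0) * (M * R1) + (M * R0) * (M * R2) + (M * R1) * (M * R2)) := by ring
    rw [e, hMR0, hMR1, hMR2]
    linear_combination (-(s^2*(M-1)*sa^2)) * hr3 + (-3*s^2*(M-1)) * hsa2 + (-3) * hs2
  have hC : M * (M - 1) * (M - 2) * (R0 * R1 * R2) = K * (K - 1) * (K - 2) := by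
    apply mul_left_cancel₀ (pow_ne_zero 2 hM0)
    have e : M ^ 2 * (M * (M - 1) * (M - 2) * (R0 * R1 * R2)) =
        (M - 1) * (M - 2) * ((M * R0) * ((M * R1) * (M * R2))) := by ring
    rw [e, hMR0, hMR1, hMR2]
    linear_combination (-(M-1)*(M-2)*(K*s^2*sa^2 + 2*s^3*ca*sa^2)) * hr3 +
      (-(M-1)*(M-2)*(3*K*s^2 + 6*s^3*ca)) * hsa2 +
      (2*s^3*(M-1)*(M-2)) * h3c + (2*s^2*(M-1)) * hsc +
      (-3*K*(M-2) + 2*(M - 2*K)) * hs2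
  have hfact : ∀ x : ℝ, M * (M - 1) * (M - 2) * x ^ 3 - 3 * K * (M - 1) * (M - 2) * x ^ 2 +
      3 * K * (K - 1) * (M - 2) * x - K * (K - 1) * (K - 2) =
      M * (M - 1) * (M - 2) * ((x - R0) * ((x - R1) * (x - R2))) := by
    intro x
    linear_combination ((M - 1) * (M - 2) * x ^ 2) * hA - ((M - 2) * x) * hB + hC
  constructor
  · have hP : (C (M * (M - 1) * (M - 2)) * X ^ 3 - C (3 * K * (M - 1) * (M - 2)) * X ^ 2 +
        C (3 * K * (K - 1) * (M - 2)) * X - C (K * (K - 1) * (K - 2))) =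
        C (M * (M - 1) * (M - 2)) * ((X - C R0) * ((X - C R1) * (X - C R2))) := by
      apply Polynomial.funext; intro x
      simp only [eval_mul, eval_sub, eval_add, eval_pow, eval_X, eval_C]
      linear_combination hfact x
    rw [hP, roots_C_mul _ hp0,
      roots_mul (mul_ne_zero (X_sub_C_ne_zero R0)
        (mul_ne_zero (X_sub_C_ne_zero R1) (X_sub_C_ne_zero R2))),
      roots_mul (mul_ne_zero (X_sub_C_ne_zero R1) (X_sub_C_ne_zero R2)),
      roots_X_sub_C, roots_X_sub_C, roots_X_sub_C]
    simp
  · have harc1 : 0 ≤ θ := Real.arccos_nonneg c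
    have harc2 : θ ≤ Real.pi := Real.arccos_le_pi c
    have hpi := Real.pi_pos
    have hca0 : 0 ≤ ca := by
      rw [hcadef]
      apply Real.cos_nonneg_of_mem_Icc
      constructor <;> [linarith; linarith]
    have hsa0 : 0 ≤ sa := by
      rw [hsadef]
      apply Real.sin_nonneg_of_nonneg_of_le_pi <;> linarith
    have h2sM : 0 ≤ 2 / M * s := by positivity
    constructor
    · show M * (M - 1) * (M - 2) * R1 ^ 3 - 3 * K * (M - 1) * (M - 2) * R1 ^ 2 +
        3 * K * (K - 1) * (M - 2) * R1 - K * (K - 1) * (K - 2) = 0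
      rw [hfact R1]; simp
    · intro x hx
      have hx' : M * (M - 1) * (M - 2) * x ^ 3 - 3 * K * (M - 1) * (M - 2) * x ^ 2 +
          3 * K * (K - 1) * (M - 2) * x - K * (K - 1) * (K - 2) = 0 := hx
      rw [hfact x] at hx'
      have h1 : (x - R0) * ((x - R1) * (x - R2)) = 0 := by
        rcases mul_eq_zero.mp hx' with h | h
        · exact absurd h hp0
        · exact h
      have hle0 : R1 ≤ R0 := by
        rw [hR0, hR1, ht1v]
        have h : -ca / 2 - r3 / 2 * sa ≤ ca := by
          linarith [mul_nonneg hr30 hsa0, hca0]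
        exact add_le_add (le_refl (K / M)) (mul_le_mul_of_nonneg_left h h2sM)
      have hle2 : R1 ≤ R2 := by
        rw [hR2, hR1, ht1v]
        have h : -ca / 2 - r3 / 2 * sa ≤ -ca / 2 + r3 / 2 * sa := by
          linarith [mul_nonneg hr30 hsa0]
        exact add_le_add (le_refl (K / M)) (mul_le_mul_of_nonneg_left h h2sM)
      rcases mul_eq_zero.mp h1 with h | h
      · rw [sub_eq_zero] at h; rw [h]; exact hle0
      · rcases mul_eq_zero.mp h with h | h
        · rw [sub_eq_zero] at h; rw [h]
        · rw [sub_eq_zero] at h; rw [h]; exact hle2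
end

section
/- Let A ∈ ℝ^{n×m} with A A^T = I_n and let n+2 ≤ m, n ≥ 2. Define α by: α = 1/2 + (1/2)√(1 - 4((n-1)/n²)(1 - (n-1)(m-n+1)/((m-n)n))) if m ≥ 2n, and α = 1/2 + (1/2)√(1 - 4(m-n-1)(2n+1-m)/((m-n)³ n)) if m ≤ 2n. Then α < 1, and hence the bound 1/(α·n(m-n)+1) is strictly larger than the Hong–Pan bound 1/(n(m-n)+1). -/
/-- For integers `m ≥ n+2`, `n ≥ 2`, the quantity `α` of Corollary 1.3 (defined by the
`m ≥ 2n` / `m ≤ 2n` case split) satisfies `α < 1`, hence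
`1/(α n(m-n)+1) > 1/(n(m-n)+1)`, strictly improving the Hong–Pan bound. -/
theorem stmt_18 (m n : ℕ) (hm : n + 2 ≤ m) (hn : 2 ≤ n) :
    let α : ℝ :=
      if 2 * n ≤ m then
        1 / 2 + 1 / 2 * Real.sqrt (1 - 4 * (((n : ℝ) - 1) / (n : ℝ) ^ 2) *
          (1 - ((n : ℝ) - 1) * ((m : ℝ) - n + 1) / (((m : ℝ) - n) * n)))
      else
        1 / 2 + 1 / 2 * Real.sqrt (1 - 4 * (((m : ℝ) - n - 1) * (2 * (n : ℝ) + 1 - m)) /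
          (((m : ℝ) - n) ^ 3 * n))
    α < 1 ∧ 1 / (α * n * ((m : ℝ) - n) + 1) > 1 / ((n : ℝ) * ((m : ℝ) - n) + 1) := by
  intro α
  have hmr : (n : ℝ) + 2 ≤ (m : ℝ) := by exact_mod_cast hm
  have hnr : (2 : ℝ) ≤ (n : ℝ) := by exact_mod_cast hn
  have hmn : (0 : ℝ) < (m : ℝ) - n := by linarith
  have hn0 : (0 : ℝ) < (n : ℝ) := by linarith
  have hα1 : α < 1 := by
    show (if 2 * n ≤ m then _ else _) < 1
    split_ifs with h
    · have h2n : 2 * (n : ℝ) ≤ (m : ℝ) := by exact_mod_cast h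
      have hfrac : ((n : ℝ) - 1) * ((m : ℝ) - n + 1) / (((m : ℝ) - n) * n) < 1 := by
        rw [div_lt_one (by positivity)]
        nlinarith
      have hpos : 0 < 4 * (((n : ℝ) - 1) / (n : ℝ) ^ 2) *
          (1 - ((n : ℝ) - 1) * ((m : ℝ) - n + 1) / (((m : ℝ) - n) * n)) := by
        apply mul_pos
        · have : (0:ℝ) < (n:ℝ) - 1 := by linarith
          positivity
        · linarith
      have hs : Real.sqrt (1 - 4 * (((n : ℝ) - 1) / (n : ℝ) ^ 2) *
          (1 - ((n : ℝ) - 1) * ((m : ℝ) - n + 1) / (((m : ℝ) - n) * n))) < 1 := by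
        rw [Real.sqrt_lt' one_pos, one_pow]
        linarith
      linarith
    · have h2n : (m : ℝ) < 2 * (n : ℝ) := by exact_mod_cast Nat.lt_of_not_le h
      have hpos : 0 < 4 * (((m : ℝ) - n - 1) * (2 * (n : ℝ) + 1 - m)) /
          (((m : ℝ) - n) ^ 3 * n) := by
        apply div_pos
        · nlinarith
        · positivity
      have hs : Real.sqrt (1 - 4 * (((m : ℝ) - n - 1) * (2 * (n : ℝ) + 1 - m)) /
          (((m : ℝ) - n) ^ 3 * n)) < 1 := by
        rw [Real.sqrt_lt' one_pos, one_pow]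
        linarith
      linarith
  have hα0 : 0 < α := by
    show (0:ℝ) < (if 2 * n ≤ m then _ else _)
    split_ifs <;> positivity
  refine ⟨hα1, ?_⟩
  have hprod : (0:ℝ) < (n:ℝ) * ((m:ℝ) - n) := mul_pos hn0 hmn
  have ha : (0:ℝ) < α * n * ((m:ℝ) - n) + 1 := by nlinarith
  have hab : α * n * ((m:ℝ) - n) + 1 < (n:ℝ) * ((m:ℝ) - n) + 1 := by nlinarith
  exact one_div_lt_one_div_of_lt ha hab
end

section
/- Let m, n, k be integers with n ≤ k ≤ n+3 and k+1 < m, n ≥ 1. Then (k-n+1)/(n(m-k) + k-n+1) > ((√((k+1)(m-n)) - √(n(m-k-1)))²)/m². -/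
/-- For integers `n ≤ k ≤ n+3`, `k+1 < m`, `n ≥ 1`:
`(k-n+1)/(n(m-k) + k-n+1) > (√((k+1)(m-n)) - √(n(m-k-1)))²/m²`. -/
theorem stmt_19 (m n k : ℕ) (hn : 1 ≤ n) (hnk : n ≤ k) (hkn3 : k ≤ n + 3) (hkm : k + 1 < m) :
    ((k : ℝ) - n + 1) / ((n : ℝ) * ((m : ℝ) - k) + ((k : ℝ) - n + 1)) >
      (Real.sqrt (((k : ℝ) + 1) * ((m : ℝ) - n)) -
          Real.sqrt ((n : ℝ) * ((m : ℝ) - k - 1))) ^ 2 / (m : ℝ) ^ 2 := by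
  have hn' : (1 : ℝ) ≤ n := by exact_mod_cast hn
  have hnk' : (n : ℝ) ≤ k := by exact_mod_cast hnk
  have hkn3' : (k : ℝ) ≤ n + 3 := by exact_mod_cast hkn3
  have hkm' : (k : ℝ) + 2 ≤ m := by exact_mod_cast hkm
  set a : ℝ := ((k : ℝ) + 1) * ((m : ℝ) - n) with ha_def
  set b : ℝ := (n : ℝ) * ((m : ℝ) - k - 1) with hb_def
  have hb : 0 < b := by
    apply mul_pos (by linarith) (by linarith)
  have ha : 0 < a := by
    apply mul_pos (by linarith) (by linarith)
  have habm : a - b = (m : ℝ) * ((k : ℝ) - n + 1) := by ring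
  have hd : (0 : ℝ) < (k : ℝ) - n + 1 := by linarith
  have hm : (0 : ℝ) < m := by linarith
  have hba : b < a := by nlinarith
  set T : ℝ := (n : ℝ) * ((m : ℝ) - k) + ((k : ℝ) - n + 1) with hT_def
  have hT : 0 < T := by
    have : 0 < (n : ℝ) * ((m : ℝ) - k) := mul_pos (by linarith) (by linarith)
    simp only [hT_def]; linarith
  -- key polynomial inequality
  have key : ((k : ℝ) - n + 1) * T < a + 3 * b := by
    have h1 : (0:ℝ) ≤ ((m:ℝ) - k - 2) * (((k:ℝ) - n + 1) + (n:ℝ) * ((n:ℝ) + 3 - k)) := by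
      apply mul_nonneg (by linarith)
      have : (0:ℝ) ≤ (n:ℝ) * ((n:ℝ) + 3 - k) := mul_nonneg (by linarith) (by linarith)
      linarith
    have h2 : (0:ℝ) ≤ (n:ℝ) * ((n:ℝ) + 3 - k) := mul_nonneg (by linarith) (by linarith)
    simp only [hT_def, ha_def, hb_def]
    nlinarith [h1, h2]
  have hsa := Real.sq_sqrt ha.le
  have hsb := Real.sq_sqrt hb.le
  have hsab : Real.sqrt a * Real.sqrt b = Real.sqrt (a * b) := (Real.sqrt_mul ha.le b).symm
  have hsabgt : b < Real.sqrt (a * b) := by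
    have h1 : Real.sqrt (b * b) < Real.sqrt (a * b) := by
      apply Real.sqrt_lt_sqrt (by positivity)
      exact mul_lt_mul_of_pos_right hba hb
    rwa [Real.sqrt_mul_self hb.le] at h1
  have hsltb : Real.sqrt b < Real.sqrt a := Real.sqrt_lt_sqrt hb.le hba
  -- S² > (d+1) T
  have hS2 : ((k : ℝ) - n + 1) * T < (Real.sqrt a + Real.sqrt b) ^ 2 := by
    have hexp : (Real.sqrt a + Real.sqrt b) ^ 2 = a + b + 2 * (Real.sqrt a * Real.sqrt b) := by
      linear_combination hsa + hsb
    rw [hexp, hsab]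
    nlinarith
  have hxpos : 0 < (Real.sqrt a - Real.sqrt b) ^ 2 :=
    pow_pos (sub_pos.2 hsltb) 2
  have hdiff : (Real.sqrt a - Real.sqrt b) * (Real.sqrt a + Real.sqrt b) = a - b := by
    linear_combination hsa - hsb
  have hprod : (Real.sqrt a - Real.sqrt b) ^ 2 * (Real.sqrt a + Real.sqrt b) ^ 2
      = (m : ℝ) ^ 2 * ((k : ℝ) - n + 1) ^ 2 := by
    rw [← mul_pow, hdiff, habm]; ring
  rw [gt_iff_lt, div_lt_div_iff₀ (by positivity) hT]
  have h1 := mul_lt_mul_of_pos_left hS2 hxpos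
  have h3 : ((k : ℝ) - n + 1) * ((Real.sqrt a - Real.sqrt b) ^ 2 * T)
      < ((k : ℝ) - n + 1) * (((k : ℝ) - n + 1) * (m : ℝ) ^ 2) := by
    calc ((k : ℝ) - n + 1) * ((Real.sqrt a - Real.sqrt b) ^ 2 * T)
        = (Real.sqrt a - Real.sqrt b) ^ 2 * (((k : ℝ) - n + 1) * T) := by ring
      _ < (Real.sqrt a - Real.sqrt b) ^ 2 * (Real.sqrt a + Real.sqrt b) ^ 2 := h1
      _ = ((k : ℝ) - n + 1) * (((k : ℝ) - n + 1) * (m : ℝ) ^ 2) := by rw [hprod]; ring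
  exact lt_of_mul_lt_mul_left h3 hd.le
end
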